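/- arXiv:2209.09744 — 3 statements merged into one kernel-verified Lean document; each statement's English description precedes it below -/
import Mathlib

section
/- Let O be a commutative ring, ℓ an element of O, and (𝒟, Σ) an O-linear triangulated category. Define 𝒟[ℓ⁻¹] to be the category with the same objects as 𝒟 and with Hom_{𝒟[ℓ⁻¹]}(X,Y) := Hom_𝒟(X,Y)[ℓ⁻¹], the localization of the O-module Hom_𝒟(X,Y) at the multiplicative set of powers of ℓ, with composition induced by that of 𝒟. Then Σ induces an auto-equivalence of 𝒟[ℓ⁻¹], and, declaring a triangle in 𝒟[ℓ⁻¹] to be distinguished exactly when it is isomorphic to the image, under the canonical functor 𝒟 → 𝒟[ℓ⁻¹], of a distinguished triangle of 𝒟, the category 𝒟[ℓ⁻¹] with this shift and this class of distinguished triangles is a triangulated category, i.e. it satisfies Verdier's axioms TR1, TR2, TR3 and the octahedral axiom TR4. -/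
open CategoryTheory CategoryTheory.Limits CategoryTheory.Pretriangulated

universe v u

section LocalizationAux

namespace LocEll

variable {O : Type*} [CommRing O] {ℓ : O}
  {D : Type u} [Category.{v} D] [Preadditive D] [Linear O D]
  {D' : Type u} [Category.{v} D'] [Preadditive D'] [Linear O D']
  (Q : D ⥤ D') [Q.Additive] [Q.Linear O]

/-- The linear map induced by `Q` on hom modules. -/
def QHom (X Y : D) : (X ⟶ Y) →ₗ[O] (Q.obj X ⟶ Q.obj Y) :=
  { toFun := fun f => Q.map f
    map_add' := fun _ _ => Q.map_add
    map_smul' := fun _ _ => Q.map_smul _ _ }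

variable (hQobj : Function.Bijective Q.obj)
  (hQloc : ∀ X Y : D, IsLocalizedModule (Submonoid.powers ℓ) (QHom Q X Y))

section
include hQloc

lemma loc_surj {X Y : D} (g : Q.obj X ⟶ Q.obj Y) :
    ∃ (c : O) (_ : c ∈ Submonoid.powers ℓ) (f : X ⟶ Y), c • g = Q.map f := by
  obtain ⟨⟨f, s⟩, hs⟩ := (hQloc X Y).surj g
  exact ⟨(s : O), s.2, f, hs⟩

lemma loc_exists_of_eq {X Y : D} {f g : X ⟶ Y} (h : Q.map f = Q.map g) :
    ∃ (c : O) (_ : c ∈ Submonoid.powers ℓ), c • f = c • g := by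
  obtain ⟨c, hc⟩ := (hQloc X Y).exists_of_eq (x₁ := f) (x₂ := g) h
  exact ⟨(c : O), c.2, hc⟩

lemma loc_torsion {X Y : D} {f : X ⟶ Y} (h : Q.map f = 0) :
    ∃ (c : O) (_ : c ∈ Submonoid.powers ℓ), c • f = 0 := by
  obtain ⟨c, hc, hc'⟩ := loc_exists_of_eq Q hQloc (f := f) (g := 0) (by simpa using h)
  exact ⟨c, hc, by simpa using hc'⟩

include hQobj

lemma loc_smul_bijective {A B : D'} {c : O} (hc : c ∈ Submonoid.powers ℓ) :
    Function.Bijective (fun g : A ⟶ B => c • g) := by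
  obtain ⟨X, rfl⟩ := hQobj.2 A
  obtain ⟨Y, rfl⟩ := hQobj.2 B
  have := (hQloc X Y).map_units ⟨c, hc⟩
  rw [Module.End.isUnit_iff] at this
  have he : ⇑(algebraMap O (Module.End O (Q.obj X ⟶ Q.obj Y)) c) = fun g => c • g := by
    funext g; exact Module.algebraMap_end_apply O O (Q.obj X ⟶ Q.obj Y) c g
  rw [he] at this
  exact this

lemma loc_smul_cancel {A B : D'} {c : O} (hc : c ∈ Submonoid.powers ℓ)
    {f g : A ⟶ B} (h : c • f = c • g) : f = g :=
  (loc_smul_bijective Q hQobj hQloc hc).1 h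

lemma isIso_smul_id (A : D') {c : O} (hc : c ∈ Submonoid.powers ℓ) :
    IsIso (c • 𝟙 A) := by
  obtain ⟨e, he⟩ := (loc_smul_bijective Q hQobj hQloc (A := A) (B := A) hc).2 (𝟙 A)
  dsimp at he
  refine ⟨e, ?_, ?_⟩
  · rw [Linear.smul_comp, Category.id_comp, he]
  · rw [Linear.comp_smul, Category.comp_id, he]

end

end LocEll

namespace LocEll

variable {O : Type*} [CommRing O] {ℓ : O}
  {D : Type u} [Category.{v} D] [Preadditive D] [Linear O D]
  {D' : Type u} [Category.{v} D'] [Preadditive D'] [Linear O D']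
  (Q : D ⥤ D') [Q.Additive] [Q.Linear O]

lemma smul_id_comp {C : Type*} [Category C] [Preadditive C] [Linear O C]
    {A B : C} (c : O) (f : A ⟶ B) : (c • 𝟙 A) ≫ f = c • f := by
  rw [Linear.smul_comp, Category.id_comp]

lemma comp_smul_id {C : Type*} [Category C] [Preadditive C] [Linear O C]
    {A B : C} (c : O) (f : A ⟶ B) : f ≫ (c • 𝟙 B) = c • f := by
  rw [Linear.comp_smul, Category.comp_id]

lemma inv_smul_id_comp {C : Type*} [Category C] [Preadditive C] [Linear O C]
    {A B : C} (c : O) (f : A ⟶ B) [IsIso (c • 𝟙 A)] :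
    inv (c • 𝟙 A) ≫ (c • f) = f := by
  have h : (c • 𝟙 A) ≫ f = c • f := smul_id_comp c f
  rw [← h, IsIso.inv_hom_id_assoc]

variable (hQobj : Function.Bijective Q.obj)
  (hQloc : ∀ X Y : D, IsLocalizedModule (Submonoid.powers ℓ) (QHom Q X Y))

section Shift

variable [HasShift D ℤ] [HasShift D' ℤ]
  [∀ n : ℤ, (shiftFunctor D n).Additive] [∀ n : ℤ, (shiftFunctor D' n).Additive]
  [Q.CommShift ℤ]

include hQobj hQloc

lemma isIso_Qmap_shift_smul_id (X : D) {c : O} (hc : c ∈ Submonoid.powers ℓ) :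
    IsIso (Q.map ((c • 𝟙 X)⟦(1:ℤ)⟧')) := by
  have nat := Q.commShiftIso_hom_naturality (c • 𝟙 X) (1:ℤ)
  have h1 : Q.map ((c • 𝟙 X)⟦(1:ℤ)⟧') =
      (Q.commShiftIso (1:ℤ)).hom.app X ≫ (Q.map (c • 𝟙 X))⟦(1:ℤ)⟧' ≫
        (Q.commShiftIso (1:ℤ)).inv.app X := by
    rw [← Category.assoc, ← nat, Category.assoc, Iso.hom_inv_id_app]
    exact (Category.comp_id _).symm
  have h2 : Q.map (c • 𝟙 X) = c • 𝟙 (Q.obj X) := by rw [Q.map_smul, Q.map_id]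
  rw [h1, h2]
  haveI := isIso_smul_id Q hQobj hQloc (Q.obj X) hc
  infer_instance

end Shift

end LocEll

namespace LocEll

set_option linter.unusedSectionVars false

variable {O : Type*} [CommRing O] {ℓ : O}
  {D : Type u} [Category.{v} D] [Preadditive D] [Linear O D]
  {D' : Type u} [Category.{v} D'] [Preadditive D'] [Linear O D']
  (Q : D ⥤ D') [Q.Additive] [Q.Linear O]
  (hQobj : Function.Bijective Q.obj)
  (hQloc : ∀ X Y : D, IsLocalizedModule (Submonoid.powers ℓ) (QHom Q X Y))

section Big

variable [HasShift D ℤ] [HasShift D' ℤ]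
  [∀ n : ℤ, (shiftFunctor D n).Additive] [∀ n : ℤ, (shiftFunctor D' n).Additive]
  [Q.CommShift ℤ] [HasZeroObject D] [Pretriangulated D]

include hQobj hQloc

lemma isIso_Qmap_of_complete (T : Triangle D) (hT : T ∈ distTriang D)
    {w : O} (hw : w ∈ Submonoid.powers ℓ) (ψ : T.obj₃ ⟶ T.obj₃)
    (h2 : T.mor₂ ≫ ψ = w • T.mor₂)
    (h3 : ψ ≫ T.mor₃ = T.mor₃ ≫ (w • 𝟙 T.obj₁)⟦(1:ℤ)⟧') :
    IsIso (Q.map ψ) := by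
  haveI hδX := isIso_Qmap_shift_smul_id Q hQobj hQloc T.obj₁ hw
  haveI hδY := isIso_Qmap_shift_smul_id Q hQobj hQloc T.obj₂ hw
  -- injectivity of postcomposition with `Q.map ψ`
  have hinj : ∀ (U : D) (v : Q.obj U ⟶ Q.obj T.obj₃), v ≫ Q.map ψ = 0 → v = 0 := by
    intro U v hv
    obtain ⟨s, hs, v₀, hsv⟩ := loc_surj Q hQloc v
    have q1 : Q.map (v₀ ≫ ψ) = 0 := by
      rw [Q.map_comp, ← hsv, Linear.smul_comp, hv, smul_zero]
    obtain ⟨t, ht, ht0⟩ := loc_torsion Q hQloc q1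
    have he : (t • v₀) ≫ ψ = 0 := by rw [Linear.smul_comp]; exact ht0
    have h31 : ((t • v₀) ≫ T.mor₃) ≫ (w • 𝟙 T.obj₁)⟦(1:ℤ)⟧' = 0 := by
      rw [Category.assoc, ← h3, ← Category.assoc, he, zero_comp]
    have q2 : Q.map ((t • v₀) ≫ T.mor₃) = 0 := by
      rw [← cancel_mono (Q.map ((w • 𝟙 T.obj₁)⟦(1:ℤ)⟧')), zero_comp, ← Q.map_comp, h31,
        Q.map_zero]
    obtain ⟨r, hr, hr0⟩ := loc_torsion Q hQloc q2
    have hr0' : ((r * t) • v₀) ≫ T.mor₃ = 0 := by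
      rw [mul_smul, Linear.smul_comp, Linear.smul_comp]
      rw [Linear.smul_comp] at hr0
      exact hr0
    obtain ⟨y, hy⟩ := Triangle.coyoneda_exact₃ T hT ((r * t) • v₀) hr0'
    have h4 : (w • y) ≫ T.mor₂ = 0 := by
      have h5 : ((r * t) • v₀) ≫ ψ = 0 := by
        rw [mul_smul, Linear.smul_comp, he, smul_zero]
      calc (w • y) ≫ T.mor₂ = y ≫ (w • T.mor₂) := by
            rw [Linear.smul_comp, Linear.comp_smul]
        _ = y ≫ (T.mor₂ ≫ ψ) := by rw [h2]
        _ = ((r * t) • v₀) ≫ ψ := by rw [← Category.assoc, ← hy]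
        _ = 0 := h5
    obtain ⟨x, hx⟩ := Triangle.coyoneda_exact₂ T hT (w • y) h4
    have h6 : (w * (r * t)) • v₀ = 0 := by
      calc (w * (r * t)) • v₀ = w • ((r * t) • v₀) := mul_smul _ _ _
        _ = (w • y) ≫ T.mor₂ := by rw [hy, Linear.smul_comp]
        _ = (x ≫ T.mor₁) ≫ T.mor₂ := by rw [hx]
        _ = x ≫ (T.mor₁ ≫ T.mor₂) := Category.assoc _ _ _
        _ = 0 := by rw [comp_distTriang_mor_zero₁₂ T hT, comp_zero]
    have h7 : ((w * (r * t)) * s) • v = 0 := by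
      have := congrArg (fun u => Q.map u) h6
      simp only [Q.map_smul, Q.map_zero] at this
      rw [← hsv, smul_smul] at this
      rw [← mul_assoc] at this ⊢
      exact this
    refine loc_smul_cancel Q hQobj hQloc
      (mul_mem (mul_mem hw (mul_mem hr ht)) hs) (f := v) (g := 0) ?_
    rw [h7, smul_zero]
  -- surjectivity of postcomposition with `Q.map ψ` on `Q`-images
  have hsur : ∀ (U : D) (v₀ : U ⟶ T.obj₃),
      ∃ v' : Q.obj U ⟶ Q.obj T.obj₃, v' ≫ Q.map ψ = Q.map v₀ := by
    intro U v₀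
    obtain ⟨p, hp, t₀, hpt⟩ :=
      loc_surj Q hQloc (Q.map (v₀ ≫ T.mor₃) ≫ inv (Q.map ((w • 𝟙 T.obj₁)⟦(1:ℤ)⟧')))
    have q1 : Q.map (t₀ ≫ (w • 𝟙 T.obj₁)⟦(1:ℤ)⟧') = Q.map (p • (v₀ ≫ T.mor₃)) := by
      rw [Q.map_comp, ← hpt, Linear.smul_comp, Category.assoc, IsIso.inv_hom_id,
        Category.comp_id, Q.map_smul]
    obtain ⟨q, hq, hq1⟩ := loc_exists_of_eq Q hQloc q1
    have hδf : (w • 𝟙 T.obj₁)⟦(1:ℤ)⟧' ≫ T.mor₁⟦(1:ℤ)⟧' =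
        T.mor₁⟦(1:ℤ)⟧' ≫ (w • 𝟙 T.obj₂)⟦(1:ℤ)⟧' := by
      rw [← Functor.map_comp, ← Functor.map_comp]
      congr 1
      rw [smul_id_comp, comp_smul_id]
    have key : ((q • t₀) ≫ T.mor₁⟦(1:ℤ)⟧') ≫ (w • 𝟙 T.obj₂)⟦(1:ℤ)⟧' = 0 := by
      calc ((q • t₀) ≫ T.mor₁⟦(1:ℤ)⟧') ≫ (w • 𝟙 T.obj₂)⟦(1:ℤ)⟧'
          = (q • t₀) ≫ ((w • 𝟙 T.obj₁)⟦(1:ℤ)⟧' ≫ T.mor₁⟦(1:ℤ)⟧') := by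
            rw [Category.assoc, hδf]
        _ = (q • (t₀ ≫ (w • 𝟙 T.obj₁)⟦(1:ℤ)⟧')) ≫ T.mor₁⟦(1:ℤ)⟧' := by
            rw [Linear.smul_comp, Linear.smul_comp, Category.assoc]
        _ = (q • (p • (v₀ ≫ T.mor₃))) ≫ T.mor₁⟦(1:ℤ)⟧' := by rw [hq1]
        _ = (q • p • v₀) ≫ (T.mor₃ ≫ T.mor₁⟦(1:ℤ)⟧') := by
            rw [smul_smul, smul_smul, Linear.smul_comp, Linear.smul_comp, Category.assoc]
        _ = 0 := by rw [comp_distTriang_mor_zero₃₁ T hT, comp_zero]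
    have q2 : Q.map ((q • t₀) ≫ T.mor₁⟦(1:ℤ)⟧') = 0 := by
      rw [← cancel_mono (Q.map ((w • 𝟙 T.obj₂)⟦(1:ℤ)⟧')), zero_comp, ← Q.map_comp, key,
        Q.map_zero]
    obtain ⟨r, hr, hr1⟩ := loc_torsion Q hQloc q2
    have hr1' : (((r * q)) • t₀) ≫ T.mor₁⟦(1:ℤ)⟧' = 0 := by
      rw [mul_smul, Linear.smul_comp, Linear.smul_comp]
      rw [Linear.smul_comp] at hr1
      exact hr1
    obtain ⟨z, hz⟩ := Triangle.coyoneda_exact₁ T hT ((r * q) • t₀) hr1'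
    have hzψ : (z ≫ ψ - ((r * q) * p) • v₀) ≫ T.mor₃ = 0 := by
      have c1 : (z ≫ ψ) ≫ T.mor₃ = (((r * q) * p) • v₀) ≫ T.mor₃ := by
        calc (z ≫ ψ) ≫ T.mor₃ = z ≫ (ψ ≫ T.mor₃) := Category.assoc _ _ _
          _ = (z ≫ T.mor₃) ≫ (w • 𝟙 T.obj₁)⟦(1:ℤ)⟧' := by rw [h3, Category.assoc]
          _ = ((r * q) • t₀) ≫ (w • 𝟙 T.obj₁)⟦(1:ℤ)⟧' := by rw [← hz]
          _ = r • (q • (t₀ ≫ (w • 𝟙 T.obj₁)⟦(1:ℤ)⟧')) := by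
              rw [mul_smul, Linear.smul_comp, Linear.smul_comp]
          _ = r • (q • (p • (v₀ ≫ T.mor₃))) := by rw [hq1]
          _ = (((r * q) * p) • v₀) ≫ T.mor₃ := by
              rw [smul_smul, smul_smul, Linear.smul_comp]
      rw [Preadditive.sub_comp, c1, sub_self]
    obtain ⟨y, hy⟩ := Triangle.coyoneda_exact₃ T hT _ hzψ
    haveI := isIso_smul_id Q hQobj hQloc (Q.obj U) hw
    obtain ⟨d, hd, y₀, hdy⟩ := loc_surj Q hQloc (inv (w • 𝟙 (Q.obj U)) ≫ Q.map y)
    have q3 : Q.map (d • y) = Q.map (w • y₀) := by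
      rw [Q.map_smul, Q.map_smul]
      calc d • Q.map y
          = d • ((w • 𝟙 (Q.obj U)) ≫ (inv (w • 𝟙 (Q.obj U)) ≫ Q.map y)) := by
            rw [IsIso.hom_inv_id_assoc]
        _ = (w • 𝟙 (Q.obj U)) ≫ (d • (inv (w • 𝟙 (Q.obj U)) ≫ Q.map y)) := by
            rw [Linear.comp_smul]
        _ = (w • 𝟙 (Q.obj U)) ≫ Q.map y₀ := by rw [hdy]
        _ = w • Q.map y₀ := smul_id_comp _ _
    obtain ⟨k, hk, hk1⟩ := loc_exists_of_eq Q hQloc q3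
    have hwk : (k * d) • y = w • (k • y₀) := by
      rw [mul_smul, hk1, smul_comm k w y₀]
    have hy' : z ≫ ψ - y ≫ T.mor₂ = ((r * q) * p) • v₀ := by
      rw [← hy]; abel
    have e1 : (((k * d) • z) - (k • y₀) ≫ T.mor₂) ≫ ψ
        = (k * d) • (z ≫ ψ) - (k • y₀) ≫ (T.mor₂ ≫ ψ) := by
      rw [Preadditive.sub_comp, Linear.smul_comp, Category.assoc]
    have e2 : (k * d) • (y ≫ T.mor₂) = w • (k • (y₀ ≫ T.mor₂)) := by
      rw [← Linear.smul_comp, hwk, Linear.smul_comp, Linear.smul_comp]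
    have e2' : (k • y₀) ≫ (T.mor₂ ≫ ψ) = w • (k • (y₀ ≫ T.mor₂)) := by
      rw [h2, Linear.comp_smul, Linear.smul_comp]
    have final : (((k * d) • z) - (k • y₀) ≫ T.mor₂) ≫ ψ
        = (((k * d) * ((r * q) * p)) • v₀) := by
      rw [e1, e2', ← e2, ← smul_sub, hy', smul_smul]
    haveI := isIso_smul_id Q hQobj hQloc (Q.obj U)
      (mul_mem (mul_mem hk hd) (mul_mem (mul_mem hr hq) hp))
    refine ⟨inv (((k * d) * ((r * q) * p)) • 𝟙 (Q.obj U)) ≫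
      Q.map (((k * d) • z) - (k • y₀) ≫ T.mor₂), ?_⟩
    rw [Category.assoc, ← Q.map_comp, final, Q.map_smul, inv_smul_id_comp]
  obtain ⟨χ, hχ⟩ := hsur T.obj₃ (𝟙 T.obj₃)
  rw [Q.map_id] at hχ
  have hl : Q.map ψ ≫ χ = 𝟙 _ := by
    have h0 : (Q.map ψ ≫ χ - 𝟙 _) ≫ Q.map ψ = 0 := by
      rw [Preadditive.sub_comp, Category.assoc, hχ, Category.comp_id, Category.id_comp,
        sub_self]
    have := hinj T.obj₃ _ h0
    rwa [sub_eq_zero] at this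
  exact ⟨χ, hl, hχ⟩

lemma core_complete {S₁ S₂ : Triangle D} (hS₁ : S₁ ∈ distTriang D) (hS₂ : S₂ ∈ distTriang D)
    (a : Q.obj S₁.obj₁ ⟶ Q.obj S₂.obj₁) (b : Q.obj S₁.obj₂ ⟶ Q.obj S₂.obj₂)
    (hab : Q.map S₁.mor₁ ≫ b = a ≫ Q.map S₂.mor₁) :
    ∃ c : Q.obj S₁.obj₃ ⟶ Q.obj S₂.obj₃,
      Q.map S₁.mor₂ ≫ c = b ≫ Q.map S₂.mor₂ ∧
      (Q.map S₁.mor₃ ≫ (Q.commShiftIso (1:ℤ)).hom.app S₁.obj₁) ≫ a⟦(1:ℤ)⟧' =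
        c ≫ (Q.map S₂.mor₃ ≫ (Q.commShiftIso (1:ℤ)).hom.app S₂.obj₁) := by
  obtain ⟨ca, hca, a₁, ha₁⟩ := loc_surj Q hQloc a
  obtain ⟨cb, hcb, b₁, hb₁⟩ := loc_surj Q hQloc b
  have hsq : Q.map (S₁.mor₁ ≫ (ca • b₁)) = Q.map ((cb • a₁) ≫ S₂.mor₁) := by
    rw [Q.map_comp, Q.map_comp, Q.map_smul, Q.map_smul, ← ha₁, ← hb₁,
      Linear.comp_smul, Linear.comp_smul, Linear.smul_comp, Linear.smul_comp,
      smul_smul, smul_smul, mul_comm ca cb, hab]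
  obtain ⟨cc, hcc, hcc1⟩ := loc_exists_of_eq Q hQloc hsq
  set w : O := cc * (cb * ca) with hwdef
  have hw : w ∈ Submonoid.powers ℓ := mul_mem hcc (mul_mem hcb hca)
  set a₂ : S₁.obj₁ ⟶ S₂.obj₁ := cc • (cb • a₁) with ha₂def
  set b₂ : S₁.obj₂ ⟶ S₂.obj₂ := cc • (ca • b₁) with hb₂def
  have hQa₂ : Q.map a₂ = w • a := by
    rw [ha₂def, Q.map_smul, Q.map_smul, ← ha₁, smul_smul, smul_smul, hwdef, mul_assoc]
  have hQb₂ : Q.map b₂ = w • b := by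
    rw [hb₂def, Q.map_smul, Q.map_smul, ← hb₁, smul_smul, smul_smul, hwdef,
      mul_comm cb ca, mul_assoc]
  have hsq₂ : S₁.mor₁ ≫ b₂ = a₂ ≫ S₂.mor₁ := by
    rw [hb₂def, ha₂def, Linear.comp_smul, Linear.smul_comp, hcc1]
  obtain ⟨c₂, hc₂₁, hc₂₂⟩ :=
    complete_distinguished_triangle_morphism S₁ S₂ hS₁ hS₂ a₂ b₂ hsq₂
  obtain ⟨ψ, hψ₁, hψ₂⟩ :=
    complete_distinguished_triangle_morphism S₁ S₁ hS₁ hS₁ (w • 𝟙 S₁.obj₁) (w • 𝟙 S₁.obj₂)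
      (by rw [comp_smul_id, smul_id_comp])
  haveI hiso := isIso_Qmap_of_complete Q hQobj hQloc S₁ hS₁ hw ψ
    (by rw [hψ₁, smul_id_comp]) hψ₂.symm
  haveI hwY := isIso_smul_id Q hQobj hQloc (Q.obj S₁.obj₂) hw
  refine ⟨inv (Q.map ψ) ≫ Q.map c₂, ?_, ?_⟩
  · rw [← cancel_epi ((w • 𝟙 (Q.obj S₁.obj₂)))]
    have hA : Q.map S₁.mor₂ ≫ Q.map ψ = (w • 𝟙 (Q.obj S₁.obj₂)) ≫ Q.map S₁.mor₂ := by
      rw [← Q.map_comp, hψ₁, Q.map_comp, Q.map_smul, Q.map_id]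
    calc (w • 𝟙 (Q.obj S₁.obj₂)) ≫ (Q.map S₁.mor₂ ≫ (inv (Q.map ψ) ≫ Q.map c₂))
        = ((w • 𝟙 (Q.obj S₁.obj₂)) ≫ Q.map S₁.mor₂) ≫ (inv (Q.map ψ) ≫ Q.map c₂) := by
          simp only [Category.assoc]
      _ = ((Q.map S₁.mor₂ ≫ Q.map ψ) ≫ inv (Q.map ψ)) ≫ Q.map c₂ := by
          rw [← hA]; simp only [Category.assoc]
      _ = Q.map S₁.mor₂ ≫ Q.map c₂ := by
          simp only [Category.assoc, IsIso.hom_inv_id_assoc]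
      _ = Q.map (b₂ ≫ S₂.mor₂) := by rw [← Q.map_comp, hc₂₁]
      _ = (w • b) ≫ Q.map S₂.mor₂ := by rw [Q.map_comp, hQb₂]
      _ = (w • 𝟙 (Q.obj S₁.obj₂)) ≫ (b ≫ Q.map S₂.mor₂) := by
          rw [Linear.smul_comp, smul_id_comp]
  · rw [← cancel_epi (Q.map ψ)]
    calc Q.map ψ ≫ (Q.map S₁.mor₃ ≫ (Q.commShiftIso (1:ℤ)).hom.app S₁.obj₁) ≫ a⟦(1:ℤ)⟧'
        = Q.map (ψ ≫ S₁.mor₃) ≫ (Q.commShiftIso (1:ℤ)).hom.app S₁.obj₁ ≫ a⟦(1:ℤ)⟧' := by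
          rw [Q.map_comp]; simp only [Category.assoc]
      _ = Q.map (S₁.mor₃ ≫ (w • 𝟙 S₁.obj₁)⟦(1:ℤ)⟧') ≫
            (Q.commShiftIso (1:ℤ)).hom.app S₁.obj₁ ≫ a⟦(1:ℤ)⟧' := by rw [hψ₂]
      _ = Q.map S₁.mor₃ ≫ (Q.map ((w • 𝟙 S₁.obj₁)⟦(1:ℤ)⟧') ≫
            (Q.commShiftIso (1:ℤ)).hom.app S₁.obj₁) ≫ a⟦(1:ℤ)⟧' := by
          rw [Q.map_comp]; simp only [Category.assoc]
      _ = Q.map S₁.mor₃ ≫ ((Q.commShiftIso (1:ℤ)).hom.app S₁.obj₁ ≫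
            (Q.map (w • 𝟙 S₁.obj₁))⟦(1:ℤ)⟧') ≫ a⟦(1:ℤ)⟧' := by
          rw [Functor.commShiftIso_hom_naturality]
      _ = Q.map S₁.mor₃ ≫ (Q.commShiftIso (1:ℤ)).hom.app S₁.obj₁ ≫
            ((w • 𝟙 (Q.obj S₁.obj₁)) ≫ a)⟦(1:ℤ)⟧' := by
          rw [Q.map_smul, Q.map_id, Functor.map_comp]; simp only [Category.assoc]
      _ = Q.map S₁.mor₃ ≫ (Q.commShiftIso (1:ℤ)).hom.app S₁.obj₁ ≫
            (Q.map a₂)⟦(1:ℤ)⟧' := by rw [smul_id_comp, ← hQa₂]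
      _ = Q.map S₁.mor₃ ≫ Q.map (a₂⟦(1:ℤ)⟧') ≫
            (Q.commShiftIso (1:ℤ)).hom.app S₂.obj₁ := by
          rw [Functor.commShiftIso_hom_naturality]
      _ = Q.map (c₂ ≫ S₂.mor₃) ≫ (Q.commShiftIso (1:ℤ)).hom.app S₂.obj₁ := by
          rw [← Category.assoc, ← Q.map_comp, hc₂₂]
      _ = Q.map ψ ≫ (inv (Q.map ψ) ≫ Q.map c₂) ≫
            (Q.map S₂.mor₃ ≫ (Q.commShiftIso (1:ℤ)).hom.app S₂.obj₁) := by
          rw [Q.map_comp]; simp only [IsIso.hom_inv_id_assoc, Category.assoc]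

end Big

end LocEll

end LocalizationAux

open LocEll

/-!
STATEMENT 0.

Let `O` be a commutative ring, `ℓ ∈ O`, and `𝒟` an `O`-linear triangulated category.
The category `𝒟[ℓ⁻¹]` has the same objects as `𝒟` and
`Hom_{𝒟[ℓ⁻¹]}(X,Y) = Hom_𝒟(X,Y)[ℓ⁻¹]` (localization at the powers of `ℓ`), with
composition induced by that of `𝒟`; the shift `Σ` induces an auto-equivalence of
`𝒟[ℓ⁻¹]`.  Declaring a triangle of `𝒟[ℓ⁻¹]` distinguished exactly when it is isomorphic
to the image of a distinguished triangle of `𝒟` under the canonical functor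
`Q : 𝒟 → 𝒟[ℓ⁻¹]`, the category `𝒟[ℓ⁻¹]` becomes a triangulated category (Verdier's
axioms TR1–TR3 are Mathlib's `Pretriangulated`, and the octahedral axiom TR4 is
Mathlib's `IsTriangulated`).

We formalize `𝒟[ℓ⁻¹]` as any category `D'` together with a functor `Q : D ⥤ D'` which
is bijective on objects, additive, `O`-linear, commutes with the shifts, and realizes
each `Hom_{D'}(QX, QY)` as the localization of the `O`-module `Hom_D(X,Y)` at the
multiplicative set of powers of `ℓ` (`IsLocalizedModule`).  The conclusion asserts the
existence of a pretriangulated structure on `D'` whose distinguished triangles are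
exactly the triangles isomorphic to images under `Q` of distinguished triangles of `D`,
and which satisfies the octahedral axiom.
-/
theorem localization_at_ell_isTriangulated
    {O : Type*} [CommRing O] (ℓ : O)
    (D : Type u) [Category.{v} D] [Preadditive D] [Linear O D]
    [HasZeroObject D] [HasShift D ℤ] [∀ n : ℤ, (shiftFunctor D n).Additive]
    [Pretriangulated D] [IsTriangulated D]
    (D' : Type u) [Category.{v} D'] [Preadditive D'] [Linear O D']
    [HasZeroObject D'] [HasShift D' ℤ] [∀ n : ℤ, (shiftFunctor D' n).Additive]
    (Q : D ⥤ D') [Q.Additive] [Q.Linear O] [Q.CommShift ℤ]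
    (hQobj : Function.Bijective Q.obj)
    (hQloc : ∀ X Y : D,
      IsLocalizedModule (Submonoid.powers ℓ)
        ({ toFun := fun f => Q.map f
           map_add' := fun _ _ => Q.map_add
           map_smul' := fun _ _ => Q.map_smul _ _ } :
          (X ⟶ Y) →ₗ[O] (Q.obj X ⟶ Q.obj Y))) :
    ∃ hP : Pretriangulated D',
      hP.distinguishedTriangles =
        {T : Triangle D' | ∃ T' ∈ (distTriang D), Nonempty (T ≅ Q.mapTriangle.obj T')} ∧
      @IsTriangulated D' _ _ _ _ _ hP := by

  have hQloc' : ∀ X Y : D, IsLocalizedModule (Submonoid.powers ℓ) (QHom Q X Y) := hQloc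
  letI hP : Pretriangulated D' :=
  { distinguishedTriangles :=
      {T : Triangle D' | ∃ T' ∈ (distTriang D), Nonempty (T ≅ Q.mapTriangle.obj T')}
    isomorphic_distinguished := by
      rintro T₁ ⟨T', hT', ⟨e⟩⟩ T₂ e₂
      exact ⟨T', hT', ⟨e₂.trans e⟩⟩
    contractible_distinguished := by
      intro A
      obtain ⟨X, rfl⟩ := hQobj.2 A
      refine ⟨contractibleTriangle X, contractible_distinguished X, ⟨?_⟩⟩
      exact Triangle.isoMk _ _ (Iso.refl _) (Iso.refl _) Q.mapZeroObject.symm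
        (by simp [Functor.mapTriangle, Triangle.mk, contractibleTriangle]) (by simp [Functor.mapTriangle, Triangle.mk, contractibleTriangle])
        (by simp [Functor.mapTriangle, Triangle.mk, contractibleTriangle])
    distinguished_cocone_triangle := by
      intro A B φ
      obtain ⟨X, rfl⟩ := hQobj.2 A
      obtain ⟨Y, rfl⟩ := hQobj.2 B
      obtain ⟨s, hs, f', hf'⟩ := loc_surj Q hQloc' φ
      obtain ⟨Z, g', h', mem⟩ := Pretriangulated.distinguished_cocone_triangle f'
      haveI := isIso_smul_id Q hQobj hQloc' (Q.obj X) hs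
      refine ⟨Q.obj Z, Q.map g',
        (Q.map h' ≫ (Q.commShiftIso (1:ℤ)).hom.app X) ≫ (s • 𝟙 (Q.obj X))⟦(1:ℤ)⟧',
        Triangle.mk f' g' h', mem, ⟨?_⟩⟩
      refine (Triangle.isoMk (Q.mapTriangle.obj (Triangle.mk f' g' h'))
        (Triangle.mk φ (Q.map g')
          ((Q.map h' ≫ (Q.commShiftIso (1:ℤ)).hom.app X) ≫ (s • 𝟙 (Q.obj X))⟦(1:ℤ)⟧'))
        (asIso (s • 𝟙 (Q.obj X)) : Q.obj X ≅ Q.obj X) (Iso.refl _) (Iso.refl _) ?_ ?_ ?_).symm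
      · dsimp [Functor.mapTriangle, Triangle.mk]
        rw [Category.comp_id, smul_id_comp, hf']
      · dsimp [Functor.mapTriangle, Triangle.mk]
        rw [Category.comp_id, Category.id_comp]
      · dsimp [Functor.mapTriangle, Triangle.mk]
        rw [Category.id_comp]
    rotate_distinguished_triangle := by
      intro T
      constructor
      · rintro ⟨T', hT', ⟨e⟩⟩
        exact ⟨T'.rotate, rot_of_distTriang T' hT',
          ⟨(Pretriangulated.rotate D').mapIso e ≪≫ Q.mapTriangleRotateIso.app T'⟩⟩
      · rintro ⟨T', hT', ⟨e⟩⟩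
        exact ⟨T'.invRotate, inv_rot_of_distTriang T' hT',
          ⟨(triangleRotation D').unitIso.app T ≪≫ (Pretriangulated.invRotate D').mapIso e ≪≫
            Q.mapTriangleInvRotateIso.app T'⟩⟩
    complete_distinguished_triangle_morphism := by
      rintro T₁ T₂ ⟨S₁, hS₁, ⟨e₁⟩⟩ ⟨S₂, hS₂, ⟨e₂⟩⟩ a b hab
      dsimp only [Functor.mapTriangle, Triangle.mk] at e₁ e₂
      have E1c1 := e₁.inv.comm₁
      have E2c1 := e₂.hom.comm₁
      obtain ⟨c', hc1, hc2⟩ := core_complete Q hQobj hQloc' hS₁ hS₂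
        (e₁.inv.hom₁ ≫ a ≫ e₂.hom.hom₁) (e₁.inv.hom₂ ≫ b ≫ e₂.hom.hom₂) (by
          rw [reassoc_of% E1c1, reassoc_of% hab, E2c1]
          simp only [Category.assoc])
      refine ⟨e₁.hom.hom₃ ≫ c' ≫ e₂.inv.hom₃, ?_, ?_⟩
      · have E1c2 := e₁.hom.comm₂
        have E2c2 := e₂.inv.comm₂
        rw [reassoc_of% E1c2, reassoc_of% hc1, E2c2]
        simp only [Category.assoc, Iso.hom_inv_id_triangle_hom₂_assoc]
      · have E1c3 := e₁.hom.comm₃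
        have E2c3 := e₂.inv.comm₃
        calc T₁.mor₃ ≫ a⟦(1:ℤ)⟧'
            = T₁.mor₃ ≫ (e₁.hom.hom₁ ≫ (e₁.inv.hom₁ ≫ a ≫ e₂.hom.hom₁) ≫ e₂.inv.hom₁)⟦(1:ℤ)⟧' := by
              simp
          _ = (T₁.mor₃ ≫ e₁.hom.hom₁⟦(1:ℤ)⟧') ≫
                ((e₁.inv.hom₁ ≫ a ≫ e₂.hom.hom₁)⟦(1:ℤ)⟧' ≫ e₂.inv.hom₁⟦(1:ℤ)⟧') := by
              simp only [Functor.map_comp, Category.assoc]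
          _ = (e₁.hom.hom₃ ≫ (Q.map S₁.mor₃ ≫ (Q.commShiftIso (1:ℤ)).hom.app S₁.obj₁)) ≫
                ((e₁.inv.hom₁ ≫ a ≫ e₂.hom.hom₁)⟦(1:ℤ)⟧' ≫ e₂.inv.hom₁⟦(1:ℤ)⟧') := by
              rw [E1c3]
          _ = e₁.hom.hom₃ ≫ ((Q.map S₁.mor₃ ≫ (Q.commShiftIso (1:ℤ)).hom.app S₁.obj₁) ≫
                (e₁.inv.hom₁ ≫ a ≫ e₂.hom.hom₁)⟦(1:ℤ)⟧') ≫ e₂.inv.hom₁⟦(1:ℤ)⟧' := by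
              simp only [Category.assoc]
          _ = e₁.hom.hom₃ ≫ (c' ≫ (Q.map S₂.mor₃ ≫ (Q.commShiftIso (1:ℤ)).hom.app S₂.obj₁)) ≫
                e₂.inv.hom₁⟦(1:ℤ)⟧' := by rw [hc2]
          _ = e₁.hom.hom₃ ≫ c' ≫ ((Q.map S₂.mor₃ ≫ (Q.commShiftIso (1:ℤ)).hom.app S₂.obj₁) ≫
                e₂.inv.hom₁⟦(1:ℤ)⟧') := by simp only [Category.assoc]
          _ = e₁.hom.hom₃ ≫ c' ≫ e₂.inv.hom₃ ≫ T₂.mor₃ := by rw [E2c3]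
          _ = (e₁.hom.hom₃ ≫ c' ≫ e₂.inv.hom₃) ≫ T₂.mor₃ := by simp only [Category.assoc] }
  refine ⟨hP, rfl, ?_⟩
  apply IsTriangulated.mk'
  intro A B C₀ u₁₂' u₂₃'
  obtain ⟨X₁, rfl⟩ := hQobj.2 A
  obtain ⟨X₂, rfl⟩ := hQobj.2 B
  obtain ⟨X₃, rfl⟩ := hQobj.2 C₀
  obtain ⟨s, hs, a, ha⟩ := loc_surj Q hQloc' u₁₂'
  obtain ⟨t, ht, b, hb⟩ := loc_surj Q hQloc' u₂₃'
  obtain ⟨Z₁₂, v₁₂, w₁₂, h₁₂⟩ := Pretriangulated.distinguished_cocone_triangle a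
  obtain ⟨Z₂₃, v₂₃, w₂₃, h₂₃⟩ := Pretriangulated.distinguished_cocone_triangle b
  obtain ⟨Z₁₃, v₁₃, w₁₃, h₁₃⟩ := Pretriangulated.distinguished_cocone_triangle (a ≫ b)
  have H := Triangulated.someOctahedron rfl h₁₂ h₂₃ h₁₃
  haveI := isIso_smul_id Q hQobj hQloc' (Q.obj X₂) hs
  haveI := isIso_smul_id Q hQobj hQloc' (Q.obj X₃) (mul_mem hs ht)
  refine ⟨Q.obj X₁, Q.obj X₂, Q.obj X₃, Q.obj Z₁₂, Q.obj Z₂₃, Q.obj Z₁₃,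
    Q.map a, Q.map b, Iso.refl _, asIso (s • 𝟙 (Q.obj X₂)), asIso ((s*t) • 𝟙 (Q.obj X₃)),
    ?_, ?_,
    Q.map v₁₂, Q.map w₁₂ ≫ (Q.commShiftIso (1:ℤ)).hom.app X₁, ?_,
    Q.map v₂₃, Q.map w₂₃ ≫ (Q.commShiftIso (1:ℤ)).hom.app X₂, ?_,
    Q.map v₁₃, Q.map w₁₃ ≫ (Q.commShiftIso (1:ℤ)).hom.app X₁, ?_, ⟨?_⟩⟩
  · dsimp
    rw [Category.id_comp, comp_smul_id, ha]
  · dsimp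
    rw [comp_smul_id, smul_id_comp, mul_smul, hb]
  · exact ⟨Triangle.mk a v₁₂ w₁₂, h₁₂, ⟨Iso.refl _⟩⟩
  · exact ⟨Triangle.mk b v₂₃ w₂₃, h₂₃, ⟨Iso.refl _⟩⟩
  · exact ⟨Triangle.mk (a ≫ b) v₁₃ w₁₃, h₁₃,
      ⟨Triangle.isoMk _ _ (Iso.refl _) (Iso.refl _) (Iso.refl _) (by simp [Functor.mapTriangle, Triangle.mk]) (by simp [Functor.mapTriangle, Triangle.mk])
        (by simp [Functor.mapTriangle, Triangle.mk])⟩⟩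
  · refine ⟨Q.map H.m₁, Q.map H.m₃, ?_, ?_, ?_, ?_, ?_⟩
    · rw [← Q.map_comp, ← Q.map_comp, H.comm₁]
    · rw [← Category.assoc, ← Q.map_comp, H.comm₂]
    · rw [← Q.map_comp, H.comm₃]
    · rw [Category.assoc, ← Q.commShiftIso_hom_naturality, ← Q.map_comp_assoc, H.comm₄,
        Q.map_comp_assoc]
    · refine ⟨Triangle.mk H.m₁ H.m₃ (w₂₃ ≫ v₁₂⟦(1:ℤ)⟧'), H.mem,
        ⟨Triangle.isoMk _ _ (Iso.refl _) (Iso.refl _) (Iso.refl _) (by simp [Functor.mapTriangle, Triangle.mk]) (by simp [Functor.mapTriangle, Triangle.mk]) ?_⟩⟩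
      dsimp [Functor.mapTriangle, Triangle.mk]
      simp only [Triangle.mk_obj₁, Triangle.mk_obj₃, Iso.refl_hom, CategoryTheory.Functor.map_id,
        Category.comp_id, Category.id_comp, Category.assoc]
      rw [← Q.commShiftIso_hom_naturality, ← Q.map_comp_assoc]
end

section
/- Let A be an O_E-module, r ∈ ℕ and d ∈ ℕ. For every continuous group automorphism σ of ℤ_ℓ^r (equivalently, for the ℤ_ℓ-linear automorphism given by any matrix in GL_r(ℤ_ℓ)) and every function f : ℤ_ℓ^r → A that is polynomial of total degree ≤ d, the function f ∘ σ is again polynomial of total degree ≤ d. Consequently, for a topological group N topologically isomorphic to ℤ_ℓ^r, the notion of polynomial function N → A and its total degree do not depend on the choice of topological group isomorphism N ≅ ℤ_ℓ^r. -/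
open scoped BigOperators

/-- The ring of integers `O_E` of a finite extension `E` of `ℚ_ℓ`, realized as the
integral closure of `ℤ_ℓ` in `E`. -/
noncomputable def PaperOE (ℓ : ℕ) [Fact (Nat.Prime ℓ)] (E : Type*) [Field E] [Algebra ℤ_[ℓ] E] :
    Subalgebra ℤ_[ℓ] E :=
  integralClosure ℤ_[ℓ] E

/-- `f : ℤ_ℓ^ι → A` is a polynomial function of total degree `≤ d`, with respect to the
extended binomial coefficient function `Cb : ℤ_ℓ × ℕ → ℤ_ℓ`: there is a finitely
supported family of coefficients `a_ι ∈ A`, vanishing in total degree `> d`, with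
`f x = Σ_m (∏ t, C(x t, m t)) • a_m`, the `ℤ_ℓ`-scalars acting through the
`ℤ_ℓ`-algebra structure of `O`. -/
def IsPolyOfDeg {ℓ : ℕ} [Fact (Nat.Prime ℓ)] (Cb : ℤ_[ℓ] → ℕ → ℤ_[ℓ])
    (O : Type*) [CommRing O] [Algebra ℤ_[ℓ] O]
    {A : Type*} [AddCommGroup A] [Module O A]
    {ι : Type*} [Fintype ι] (d : ℕ) (f : (ι → ℤ_[ℓ]) → A) : Prop :=
  ∃ a : (ι → ℕ) →₀ A,
    (∀ m : ι → ℕ, (∑ t, m t) > d → a m = 0) ∧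
    ∀ x : ι → ℤ_[ℓ], f x = a.sum fun m v => algebraMap ℤ_[ℓ] O (∏ t, Cb (x t) (m t)) • v

section
open Finset

namespace PolyAux

variable {p : ℕ} [Fact (Nat.Prime p)]

/-- Two continuous functions on `ℤ_[p]` agreeing on `ℕ` are equal. -/
lemma padic_ext {M : Type*} [TopologicalSpace M] [T2Space M] {f g : ℤ_[p] → M}
    (hf : Continuous f) (hg : Continuous g) (h : ∀ n : ℕ, f n = g n) : f = g :=
  PadicInt.denseRange_natCast.equalizer hf hg (funext fun n => h n)

variable (Cb : ℤ_[p] → ℕ → ℤ_[p])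
variable (hc : ∀ k, Continuous fun x => Cb x k)
variable (hn : ∀ n k : ℕ, Cb (n : ℤ_[p]) k = ((n.choose k : ℕ) : ℤ_[p]))

include hc hn

lemma Cb_zero (x : ℤ_[p]) : Cb x 0 = 1 := by
  have := padic_ext (hc 0) (continuous_const : Continuous fun _ : ℤ_[p] => (1 : ℤ_[p]))
    (fun n => by simp [hn n 0])
  exact congrFun this x

lemma Cb_succ (k : ℕ) (x : ℤ_[p]) : Cb (x + 1) (k + 1) = Cb x (k + 1) + Cb x k := by
  have h := padic_ext (f := fun x : ℤ_[p] => Cb (x + 1) (k + 1))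
    (g := fun x => Cb x (k + 1) + Cb x k)
    ((hc (k + 1)).comp (continuous_id.add continuous_const))
    (((hc (k + 1))).add (hc k)) ?_
  · exact congrFun h x
  · intro n
    have : ((n : ℤ_[p]) + 1) = ((n + 1 : ℕ) : ℤ_[p]) := by push_cast; ring
    rw [this, hn, hn, hn, Nat.choose_succ_succ]
    push_cast; ring

lemma Cb_add (k : ℕ) (x y : ℤ_[p]) :
    Cb (x + y) k = ∑ i ∈ range (k + 1), Cb x i * Cb y (k - i) := by
  have step1 : ∀ n : ℕ, ∀ x : ℤ_[p],
      Cb (x + n) k = ∑ i ∈ range (k + 1), Cb x i * Cb (n : ℤ_[p]) (k - i) := by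
    intro n
    have h := padic_ext (f := fun x : ℤ_[p] => Cb (x + n) k)
      (g := fun x => ∑ i ∈ range (k + 1), Cb x i * Cb (n : ℤ_[p]) (k - i))
      ((hc k).comp (continuous_id.add continuous_const))
      (continuous_finset_sum _ fun i _ => (hc i).mul continuous_const) ?_
    · exact fun x => congrFun h x
    · intro m
      have : ((m : ℤ_[p]) + n) = ((m + n : ℕ) : ℤ_[p]) := by push_cast; ring
      rw [this, hn]
      have v := Nat.add_choose_eq m n k
      rw [Finset.Nat.sum_antidiagonal_eq_sum_range_succ (fun a b => m.choose a * n.choose b) k] at v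
      rw [v]
      push_cast
      exact Finset.sum_congr rfl fun i _ => by rw [hn, hn]
  have h := padic_ext (f := fun y : ℤ_[p] => Cb (x + y) k)
    (g := fun y => ∑ i ∈ range (k + 1), Cb x i * Cb y (k - i))
    ((hc k).comp (continuous_const.add continuous_id))
    (continuous_finset_sum _ fun i _ => continuous_const.mul (hc (k - i))) ?_
  · exact congrFun h y
  · intro n; exact step1 n x


omit hc hn

/-- The forward difference operator, as a `ℤ_[p]`-linear endomorphism of functions. -/
noncomputable def fwdL : (ℤ_[p] → ℤ_[p]) →ₗ[ℤ_[p]] (ℤ_[p] → ℤ_[p]) where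
  toFun g := fun y => g (y + 1) - g y
  map_add' g h := by funext y; simp only [Pi.add_apply]; ring
  map_smul' c g := by funext y; simp only [Pi.smul_apply, smul_eq_mul, RingHom.id_apply]; ring

lemma fwdL_apply (g : ℤ_[p] → ℤ_[p]) (y : ℤ_[p]) : fwdL g y = g (y + 1) - g y := rfl

lemma fwdL_pow_succ (n : ℕ) (g : ℤ_[p] → ℤ_[p]) :
    (fwdL ^ (n + 1)) g = (fwdL ^ n) (fwdL g) := by
  rw [pow_succ, Module.End.mul_apply]

lemma fwdL_cont {g : ℤ_[p] → ℤ_[p]} (hg : Continuous g) (n : ℕ) :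
    Continuous ((fwdL ^ n) g) := by
  induction n generalizing g with
  | zero => simpa using hg
  | succ n ih =>
    rw [fwdL_pow_succ]
    exact ih ((hg.comp (continuous_id.add continuous_const)).sub hg)

lemma nil_of_le {m n : ℕ} {g : ℤ_[p] → ℤ_[p]} (h : m ≤ n) (hg : (fwdL ^ m) g = 0) :
    (fwdL ^ n) g = 0 := by
  obtain ⟨a, rfl⟩ := Nat.exists_eq_add_of_le h
  rw [add_comm, pow_add, Module.End.mul_apply, hg, map_zero]

lemma fwdL_const (q : ℤ_[p]) : fwdL (fun _ => q) = 0 := by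
  funext y; simp [fwdL_apply]

/-- Newton's forward-difference formula on the natural numbers. -/
lemma newton_nat : ∀ (k : ℕ) (g : ℤ_[p] → ℤ_[p]), (fwdL ^ (k + 1)) g = 0 →
    ∀ m : ℕ, g m = ∑ n ∈ range (k + 1), ((m.choose n : ℕ) : ℤ_[p]) * ((fwdL ^ n) g 0) := by
  intro k
  induction k with
  | zero =>
    intro g hg m
    have hstep : ∀ y, g (y + 1) = g y := by
      intro y
      have h0 := congrFun hg y
      simp only [pow_one, fwdL_apply, Pi.zero_apply] at h0
      exact sub_eq_zero.mp h0
    have hm : g m = g 0 := by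
      induction m with
      | zero => norm_num
      | succ m ih =>
        rw [show ((m + 1 : ℕ) : ℤ_[p]) = (m : ℤ_[p]) + 1 by push_cast; ring, hstep, ih]
    rw [hm]
    simp
  | succ k ih =>
    intro g hg m
    have hg' : (fwdL ^ (k + 1)) (fwdL g) = 0 := by
      rw [← fwdL_pow_succ]; exact hg
    have IH := ih (fwdL g) hg'
    have key : ∀ n : ℕ, (fwdL ^ n) (fwdL g) = (fwdL ^ (n + 1)) g :=
      fun n => (fwdL_pow_succ n g).symm
    induction m with
    | zero =>
      rw [Finset.sum_range_succ']
      simp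
    | succ m ihm =>
      have hstep : g ((m + 1 : ℕ) : ℤ_[p]) = g m + fwdL g m := by
        rw [show ((m + 1 : ℕ) : ℤ_[p]) = (m : ℤ_[p]) + 1 by push_cast; ring, fwdL_apply]
        ring
      rw [hstep, ihm, IH m]
      simp only [key]
      rw [Finset.sum_range_succ' (fun n => ((m.choose n : ℕ) : ℤ_[p]) * ((fwdL ^ n) g 0)) (k + 1),
        Finset.sum_range_succ'
          (fun n => (((m + 1).choose n : ℕ) : ℤ_[p]) * ((fwdL ^ n) g 0)) (k + 1)]
      have hcomb :
          (∑ i ∈ range (k + 1), (((m + 1).choose (i + 1) : ℕ) : ℤ_[p]) * ((fwdL ^ (i + 1)) g 0))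
          = (∑ i ∈ range (k + 1), ((m.choose (i + 1) : ℕ) : ℤ_[p]) * ((fwdL ^ (i + 1)) g 0))
            + ∑ i ∈ range (k + 1), ((m.choose i : ℕ) : ℤ_[p]) * ((fwdL ^ (i + 1)) g 0) := by
        rw [← Finset.sum_add_distrib]
        refine Finset.sum_congr rfl fun i _ => ?_
        rw [Nat.choose_succ_succ]
        push_cast; ring
      rw [hcomb]
      simp only [Nat.choose_zero_right, Nat.cast_one, one_mul]
      ring

include hc hn

lemma newton (k : ℕ) (g : ℤ_[p] → ℤ_[p]) (hgc : Continuous g)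
    (hnil : (fwdL ^ (k + 1)) g = 0) :
    ∀ x, g x = ∑ n ∈ range (k + 1), ((fwdL ^ n) g 0) * Cb x n := by
  have h := padic_ext (f := g)
    (g := fun x => ∑ n ∈ range (k + 1), ((fwdL ^ n) g 0) * Cb x n)
    hgc (continuous_finset_sum _ fun n _ => continuous_const.mul (hc n)) ?_
  · exact fun x => congrFun h x
  · intro m
    rw [newton_nat k g hnil m]
    exact Finset.sum_congr rfl fun n _ => by rw [hn]; ring

lemma fwd_Cb_succ (k : ℕ) : fwdL (fun y => Cb y (k + 1)) = fun y => Cb y k := by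
  funext y; rw [fwdL_apply, Cb_succ Cb hc hn]; ring

lemma fwd_Cb_zero : fwdL (fun y : ℤ_[p] => Cb y 0) = 0 := by
  funext y
  rw [fwdL_apply, Cb_zero Cb hc hn, Cb_zero Cb hc hn]
  simp

lemma nil_Cb (k : ℕ) : (fwdL ^ (k + 1)) (fun y => Cb y k) = 0 := by
  induction k with
  | zero => rw [pow_one]; exact fwd_Cb_zero Cb hc hn
  | succ k ih => rw [fwdL_pow_succ, fwd_Cb_succ Cb hc hn]; exact ih

lemma nil_scale (c : ℤ_[p]) (k : ℕ) : (fwdL ^ (k + 1)) (fun y => Cb (c * y) k) = 0 := by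
  induction k using Nat.strong_induction_on with
  | _ k IH =>
    have hfwd : fwdL (fun y => Cb (c * y) k)
        = ∑ i ∈ range k, Cb c (k - i) • (fun y => Cb (c * y) i) := by
      funext y
      rw [fwdL_apply]
      have hcy : c * (y + 1) = c * y + c := by ring
      rw [hcy, Cb_add Cb hc hn k (c * y) c, Finset.sum_range_succ, Nat.sub_self,
        Cb_zero Cb hc hn, mul_one, add_sub_cancel_right, Finset.sum_apply]
      exact Finset.sum_congr rfl fun i _ => by
        simp only [Pi.smul_apply, smul_eq_mul]; ring
    rw [fwdL_pow_succ, hfwd, map_sum]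
    refine Finset.sum_eq_zero fun i hi => ?_
    rw [map_smul]
    have h0 : (fwdL ^ k) (fun y => Cb (c * y) i) = 0 :=
      nil_of_le (Nat.succ_le_of_lt (mem_range.mp hi)) (IH i (mem_range.mp hi))
    rw [h0, smul_zero]

lemma nil_Cb_mul : ∀ (s a b : ℕ), a + b ≤ s →
    (fwdL ^ (s + 1)) (fun y => Cb y a * Cb y b) = 0 := by
  intro s
  induction s with
  | zero =>
    intro a b hab
    obtain ⟨rfl, rfl⟩ : a = 0 ∧ b = 0 := by omega
    have h1 : (fun y : ℤ_[p] => Cb y 0 * Cb y 0) = fun _ => (1 : ℤ_[p]) := by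
      funext y; rw [Cb_zero Cb hc hn, mul_one]
    rw [pow_one, h1, fwdL_const]
  | succ s IH =>
    intro a b hab
    match a, b with
    | 0, b =>
      have h1 : (fun y : ℤ_[p] => Cb y 0 * Cb y b) = fun y => Cb y b := by
        funext y; rw [Cb_zero Cb hc hn, one_mul]
      rw [h1]
      exact nil_of_le (by omega) (nil_Cb Cb hc hn b)
    | (a+1), 0 =>
      have h1 : (fun y : ℤ_[p] => Cb y (a+1) * Cb y 0) = fun y => Cb y (a+1) := by
        funext y; rw [Cb_zero Cb hc hn, mul_one]
      rw [h1]
      exact nil_of_le (by omega) (nil_Cb Cb hc hn (a+1))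
    | (a+1), (b+1) =>
      have hfwd : fwdL (fun y => Cb y (a+1) * Cb y (b+1))
          = (fun y => Cb y (a+1) * Cb y b) + ((fun y => Cb y a * Cb y (b+1))
            + fun y => Cb y a * Cb y b) := by
        funext y
        simp only [fwdL_apply, Pi.add_apply]
        rw [Cb_succ Cb hc hn, Cb_succ Cb hc hn]
        ring
      rw [fwdL_pow_succ, hfwd, map_add, map_add,
        IH (a+1) b (by omega), IH a (b+1) (by omega), IH a b (by omega)]
      simp

lemma mul_expand (a b : ℕ) : ∃ cf : ℕ → ℤ_[p],
    ∀ y, Cb y a * Cb y b = ∑ i ∈ range (a + b + 1), cf i * Cb y i :=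
  ⟨fun i => (fwdL ^ i) (fun y => Cb y a * Cb y b) 0,
    newton Cb hc hn (a + b) _ ((hc a).mul (hc b)) (nil_Cb_mul Cb hc hn (a + b) a b le_rfl)⟩

lemma scale_expand (c : ℤ_[p]) (k : ℕ) : ∃ cf : ℕ → ℤ_[p],
    ∀ y, Cb (c * y) k = ∑ i ∈ range (k + 1), cf i * Cb y i :=
  ⟨_, newton Cb hc hn k _ ((hc k).comp (continuous_const.mul continuous_id))
    (nil_scale Cb hc hn c k)⟩

variable (r : ℕ)

omit hc hn

/-- Multivariate binomial basis function. -/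
noncomputable def Bf (n : Fin r → ℕ) : (Fin r → ℤ_[p]) → ℤ_[p] := fun x => ∏ j, Cb (x j) (n j)

/-- Span of the basis functions of total degree at most `d`. -/
noncomputable def Pm (d : ℕ) : Submodule ℤ_[p] ((Fin r → ℤ_[p]) → ℤ_[p]) :=
  Submodule.span ℤ_[p] (Bf Cb r '' {n | ∑ j, n j ≤ d})

lemma mem_Pm_of {d : ℕ} (n : Fin r → ℕ) (h : ∑ j, n j ≤ d) : Bf Cb r n ∈ Pm Cb r d :=
  Submodule.subset_span ⟨n, h, rfl⟩

include hc hn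

lemma Bf_zero : Bf Cb r 0 = fun _ => 1 := by
  funext x; simp [Bf, Cb_zero Cb hc hn]

lemma const_mem (q : ℤ_[p]) (d : ℕ) : (fun _ : Fin r → ℤ_[p] => q) ∈ Pm Cb r d := by
  have h1 : (fun _ : Fin r → ℤ_[p] => q) = q • Bf Cb r 0 := by
    rw [Bf_zero Cb hc hn]; funext x; simp
  rw [h1]
  exact Submodule.smul_mem _ _ (mem_Pm_of Cb r 0 (by simp))

lemma Bf_mul_Bf {a b : ℕ} {m n : Fin r → ℕ} (hm : ∑ j, m j ≤ a) (hnn : ∑ j, n j ≤ b) :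
    Bf Cb r m * Bf Cb r n ∈ Pm Cb r (a + b) := by
  have hex : ∀ j : Fin r, ∃ cf : ℕ → ℤ_[p],
      ∀ y, Cb y (m j) * Cb y (n j) = ∑ i ∈ range (m j + n j + 1), cf i * Cb y i :=
    fun j => mul_expand Cb hc hn (m j) (n j)
  choose cf hcf using hex
  have key : Bf Cb r m * Bf Cb r n
      = ∑ q ∈ Fintype.piFinset (fun j => range (m j + n j + 1)),
          (∏ j, cf j (q j)) • Bf Cb r q := by
    funext x
    rw [Finset.sum_apply]
    simp only [Pi.mul_apply, Pi.smul_apply, smul_eq_mul, Bf]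
    rw [← Finset.prod_mul_distrib]
    calc ∏ j, Cb (x j) (m j) * Cb (x j) (n j)
        = ∏ j, ∑ i ∈ range (m j + n j + 1), cf j i * Cb (x j) i :=
          Finset.prod_congr rfl fun j _ => hcf j (x j)
      _ = ∑ q ∈ Fintype.piFinset (fun j => range (m j + n j + 1)),
            ∏ j, (cf j (q j) * Cb (x j) (q j)) := Finset.prod_univ_sum _ _
      _ = _ := Finset.sum_congr rfl fun q _ => by rw [Finset.prod_mul_distrib]
  rw [key]
  refine Submodule.sum_mem _ fun q hq => Submodule.smul_mem _ _ (mem_Pm_of Cb r q ?_)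
  have hq' := Fintype.mem_piFinset.mp hq
  calc ∑ j, q j ≤ ∑ j, (m j + n j) :=
        Finset.sum_le_sum fun j _ => Nat.lt_succ_iff.mp (mem_range.mp (hq' j))
    _ = (∑ j, m j) + ∑ j, n j := Finset.sum_add_distrib
    _ ≤ a + b := Nat.add_le_add hm hnn

lemma Pm_mul {a b : ℕ} {f g : (Fin r → ℤ_[p]) → ℤ_[p]}
    (hf : f ∈ Pm Cb r a) (hg : g ∈ Pm Cb r b) : f * g ∈ Pm Cb r (a + b) := by
  induction hf using Submodule.span_induction with
  | mem f hf =>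
    obtain ⟨m, hm, rfl⟩ := hf
    induction hg using Submodule.span_induction with
    | mem g hg =>
      obtain ⟨n, hn2, rfl⟩ := hg
      exact Bf_mul_Bf Cb hc hn r hm hn2
    | zero => rw [mul_zero]; exact Submodule.zero_mem _
    | add g₁ g₂ _ _ ih1 ih2 => rw [mul_add]; exact Submodule.add_mem _ ih1 ih2
    | smul c g _ ih => rw [mul_smul_comm]; exact Submodule.smul_mem _ _ ih
  | zero => rw [zero_mul]; exact Submodule.zero_mem _
  | add f₁ f₂ _ _ ih1 ih2 => rw [add_mul]; exact Submodule.add_mem _ ih1 ih2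
  | smul c f _ ih => rw [smul_mul_assoc]; exact Submodule.smul_mem _ _ ih

lemma Bf_single (j : Fin r) (i : ℕ) :
    Bf Cb r (Pi.single j i) = fun x => Cb (x j) i := by
  funext x
  rw [Bf, Finset.prod_eq_single j]
  · rw [Pi.single_eq_same]
  · intro j' _ hj'; rw [Pi.single_eq_of_ne hj', Cb_zero Cb hc hn]
  · intro h; exact absurd (Finset.mem_univ j) h

lemma coord_mem (c : ℤ_[p]) (j : Fin r) (k : ℕ) :
    (fun x : Fin r → ℤ_[p] => Cb (c * x j) k) ∈ Pm Cb r k := by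
  obtain ⟨cf, hcf⟩ := scale_expand Cb hc hn c k
  have key : (fun x : Fin r → ℤ_[p] => Cb (c * x j) k)
      = ∑ i ∈ range (k + 1), cf i • Bf Cb r (Pi.single j i) := by
    funext x
    rw [Finset.sum_apply, hcf (x j)]
    exact Finset.sum_congr rfl fun i _ => by
      rw [Bf_single Cb hc hn r, Pi.smul_apply, smul_eq_mul]
  rw [key]
  refine Submodule.sum_mem _ fun i hi => Submodule.smul_mem _ _ (mem_Pm_of Cb r _ ?_)
  have hsum : ∑ j', Pi.single j i j' = i := by
    rw [Finset.sum_eq_single j]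
    · rw [Pi.single_eq_same]
    · intro j' _ hj'; rw [Pi.single_eq_of_ne hj']
    · intro h; exact absurd (Finset.mem_univ j) h
  rw [hsum]
  exact Nat.lt_succ_iff.mp (mem_range.mp hi)

lemma lin_mem (L : Fin r → ℤ_[p]) (s : Finset (Fin r)) :
    ∀ k : ℕ, (fun x : Fin r → ℤ_[p] => Cb (∑ j ∈ s, L j * x j) k) ∈ Pm Cb r k := by
  induction s using Finset.induction_on with
  | empty =>
    intro k
    simpa using const_mem Cb hc hn r (Cb 0 k) k
  | @insert j s hj ih =>
    intro k
    have key : (fun x : Fin r → ℤ_[p] => Cb (∑ j' ∈ insert j s, L j' * x j') k)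
        = ∑ i ∈ range (k + 1),
            (fun x => Cb (L j * x j) i) * fun x => Cb (∑ j' ∈ s, L j' * x j') (k - i) := by
      funext x
      rw [Finset.sum_apply]
      simp only [Pi.mul_apply]
      rw [Finset.sum_insert hj, Cb_add Cb hc hn k]
    rw [key]
    refine Submodule.sum_mem _ fun i hi => ?_
    have hik : i + (k - i) = k := Nat.add_sub_cancel' (Nat.lt_succ_iff.mp (mem_range.mp hi))
    have hmem := Pm_mul Cb hc hn r (coord_mem Cb hc hn r (L j) j i) (ih (k - i))
    rwa [hik] at hmem

lemma prod_mem (L : Fin r → Fin r → ℤ_[p]) (m : Fin r → ℕ) (s : Finset (Fin r)) :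
    (fun x : Fin r → ℤ_[p] => ∏ t ∈ s, Cb (∑ j, L t j * x j) (m t))
      ∈ Pm Cb r (∑ t ∈ s, m t) := by
  induction s using Finset.induction_on with
  | empty => simpa using const_mem Cb hc hn r 1 0
  | @insert t s ht ih =>
    have key : (fun x : Fin r → ℤ_[p] => ∏ t' ∈ insert t s, Cb (∑ j, L t' j * x j) (m t'))
        = (fun x => Cb (∑ j, L t j * x j) (m t))
          * fun x => ∏ t' ∈ s, Cb (∑ j, L t' j * x j) (m t') := by
      funext x; rw [Pi.mul_apply, Finset.prod_insert ht]
    rw [key, Finset.sum_insert ht]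
    exact Pm_mul Cb hc hn r (lin_mem Cb hc hn r (L t) univ (m t)) ih

omit hc hn in
lemma Pm_elim {d : ℕ} {f : (Fin r → ℤ_[p]) → ℤ_[p]} (hf : f ∈ Pm Cb r d) :
    ∃ c : (Fin r → ℕ) →₀ ℤ_[p], (∀ n, ∑ j, n j > d → c n = 0) ∧
      ∀ x, f x = c.sum fun n q => q * Bf Cb r n x := by
  induction hf using Submodule.span_induction with
  | mem f hf =>
    obtain ⟨n, hn2, rfl⟩ := hf
    refine ⟨Finsupp.single n 1, fun m hm => ?_, fun x => ?_⟩
    · classical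
      rw [Finsupp.single_apply, if_neg]
      rintro rfl
      simp only [Set.mem_setOf_eq] at hn2
      omega
    · rw [Finsupp.sum_single_index (by simp), one_mul]
  | zero => exact ⟨0, by simp, fun x => by simp⟩
  | add f₁ f₂ _ _ ih1 ih2 =>
    obtain ⟨c₁, h1, e1⟩ := ih1; obtain ⟨c₂, h2, e2⟩ := ih2
    refine ⟨c₁ + c₂, fun n hn2 => by simp [Finsupp.add_apply, h1 n hn2, h2 n hn2],
      fun x => ?_⟩
    rw [Pi.add_apply, e1 x, e2 x]
    exact (Finsupp.sum_add_index' (fun n => by simp) (fun n q₁ q₂ => by simp [add_mul])).symm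
  | smul q f _ ih =>
    obtain ⟨c, h1, e1⟩ := ih
    refine ⟨q • c, fun n hn2 => by simp [Finsupp.smul_apply, h1 n hn2], fun x => ?_⟩
    rw [Pi.smul_apply, smul_eq_mul, e1 x, Finsupp.mul_sum,
      Finsupp.sum_smul_index (fun n => by simp)]
    exact Finsupp.sum_congr fun n _ => by ring

omit hc hn in
lemma Pm_mono {d d' : ℕ} (h : d ≤ d') : Pm Cb r d ≤ Pm Cb r d' :=
  Submodule.span_mono (Set.image_mono fun n hn2 => le_trans hn2 h)

include hc hn

lemma comp_linear {O : Type*} [CommRing O] [Algebra ℤ_[p] O]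
    {A : Type*} [AddCommGroup A] [Module O A] (r d : ℕ)
    (L : Fin r → Fin r → ℤ_[p]) {f : (Fin r → ℤ_[p]) → A}
    (hf : IsPolyOfDeg Cb O d f) :
    IsPolyOfDeg Cb O d (fun x => f (fun t => ∑ j, L t j * x j)) := by
  classical
  obtain ⟨a, hdeg, heval⟩ := hf
  have hex : ∀ m : Fin r → ℕ, ∃ c : (Fin r → ℕ) →₀ ℤ_[p],
      (∀ n, ∑ j, n j > d → c n = 0) ∧
      ((∑ t, m t) ≤ d → ∀ x, (∏ t, Cb (∑ j, L t j * x j) (m t))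
        = c.sum fun n q => q * Bf Cb r n x) := by
    intro m
    by_cases hm : (∑ t, m t) ≤ d
    · have hmem : (fun x : Fin r → ℤ_[p] => ∏ t, Cb (∑ j, L t j * x j) (m t))
          ∈ Pm Cb r d :=
        Pm_mono Cb r hm (prod_mem Cb hc hn r L m univ)
      obtain ⟨c, h1, h2⟩ := Pm_elim Cb r hmem
      exact ⟨c, h1, fun _ x => h2 x⟩
    · exact ⟨0, by simp, fun h => absurd h hm⟩
  choose c hdegc hevalc using hex
  refine ⟨∑ m ∈ a.support, ∑ n0 ∈ (c m).support,
      Finsupp.single n0 ((algebraMap ℤ_[p] O (c m n0)) • a m), ?_, ?_⟩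
  · intro n hgt
    rw [Finset.sum_apply']
    refine Finset.sum_eq_zero fun m hm => ?_
    rw [Finset.sum_apply']
    refine Finset.sum_eq_zero fun n' hn' => ?_
    rcases eq_or_ne n' n with rfl | hne
    · exact absurd (hdegc m n' hgt) (Finsupp.mem_support_iff.mp hn')
    · exact Finsupp.single_eq_of_ne' hne
  · intro x
    dsimp only
    set F : (Fin r → ℕ) → A → A :=
      fun n v => algebraMap ℤ_[p] O (∏ t, Cb (x t) (n t)) • v with hFdef
    have hF0 : ∀ n, F n 0 = 0 := fun n => smul_zero _
    have hFadd : ∀ n v w, F n (v + w) = F n v + F n w := fun n v w => smul_add _ v w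
    rw [← Finsupp.sum_finsetSum_index hF0 hFadd]
    rw [heval (fun t => ∑ j, L t j * x j), Finsupp.sum]
    refine Finset.sum_congr rfl fun m hm => ?_
    have hmd : (∑ t, m t) ≤ d := by
      by_contra hcon
      exact Finsupp.mem_support_iff.mp hm (hdeg m (by omega))
    rw [← Finsupp.sum_finsetSum_index hF0 hFadd]
    have hev := hevalc m hmd x
    rw [hev, Finsupp.sum, map_sum, Finset.sum_smul]
    refine Finset.sum_congr rfl fun n0 hn0 => ?_
    rw [Finsupp.sum_single_index (hF0 n0), hFdef]
    dsimp only
    rw [mul_comm, map_mul, mul_smul]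
    rfl

lemma equiv_smul (r : ℕ) (σ : (Fin r → ℤ_[p]) ≃+ (Fin r → ℤ_[p])) (hσ : Continuous σ)
    (c : ℤ_[p]) (x : Fin r → ℤ_[p]) : σ (c • x) = c • σ x := by
  have h1 : Continuous fun c : ℤ_[p] => σ (c • x) :=
    hσ.comp (continuous_id.smul continuous_const)
  have h2 : Continuous fun c : ℤ_[p] => c • σ x :=
    continuous_id.smul continuous_const
  have h := padic_ext h1 h2 ?_
  · exact congrFun h c
  · intro n
    rw [Nat.cast_smul_eq_nsmul, map_nsmul, Nat.cast_smul_eq_nsmul]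

lemma equiv_formula (r : ℕ) (σ : (Fin r → ℤ_[p]) ≃+ (Fin r → ℤ_[p])) (hσ : Continuous σ)
    (x : Fin r → ℤ_[p]) :
    σ x = fun t => ∑ j, σ (Pi.single j 1) t * x j := by
  have hx : x = ∑ j, x j • (Pi.single j 1 : Fin r → ℤ_[p]) := by
    funext t
    rw [Finset.sum_apply, Finset.sum_eq_single t]
    · simp
    · intro j _ hj
      rw [Pi.smul_apply, Pi.single_eq_of_ne (Ne.symm hj), smul_zero]
    · intro h; exact absurd (Finset.mem_univ t) h
  conv_lhs => rw [hx]
  rw [map_sum]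
  funext t
  rw [Finset.sum_apply]
  refine Finset.sum_congr rfl fun j _ => ?_
  rw [equiv_smul Cb hc hn r σ hσ, Pi.smul_apply, smul_eq_mul, mul_comm]

end PolyAux

end

/-!
STATEMENT 4.

For every continuous group automorphism `σ` of `ℤ_ℓ^r` and every function `f : ℤ_ℓ^r → A`
(`A` a module over the ring of integers `O_E` of a finite extension `E` of `ℚ_ℓ`) that is
polynomial of total degree `≤ d`, the function `f ∘ σ` is again polynomial of total degree
`≤ d`.  Consequently, for a topological (additive) group `N` topologically isomorphic to
`ℤ_ℓ^r`, the notion of polynomial function `N → A` of total degree `≤ d` does not depend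
on the choice of topological group isomorphism `N ≅ ℤ_ℓ^r`.
-/
theorem polyOfDeg_comp_continuous_autom
    (ℓ : ℕ) [Fact (Nat.Prime ℓ)]
    (E : Type*) [Field E] [Algebra ℚ_[ℓ] E] [FiniteDimensional ℚ_[ℓ] E]
    [Algebra ℤ_[ℓ] E] [IsScalarTower ℤ_[ℓ] ℚ_[ℓ] E]
    (Cb : ℤ_[ℓ] → ℕ → ℤ_[ℓ])
    (hCb_cont : ∀ k, Continuous fun x => Cb x k)
    (hCb_nat : ∀ n k : ℕ, Cb (n : ℤ_[ℓ]) k = ((n.choose k : ℕ) : ℤ_[ℓ]))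
    (A : Type*) [AddCommGroup A] [Module ↥(PaperOE ℓ E) A]
    (r d : ℕ) :
    (∀ σ : (Fin r → ℤ_[ℓ]) ≃+ (Fin r → ℤ_[ℓ]), Continuous σ → Continuous σ.symm →
      ∀ f : (Fin r → ℤ_[ℓ]) → A,
        IsPolyOfDeg Cb ↥(PaperOE ℓ E) d f → IsPolyOfDeg Cb ↥(PaperOE ℓ E) d (f ∘ σ)) ∧
    (∀ (N : Type) [AddCommGroup N] [TopologicalSpace N] [IsTopologicalAddGroup N]
      (ψ₁ ψ₂ : N ≃+ (Fin r → ℤ_[ℓ])),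
        Continuous ψ₁ → Continuous ψ₁.symm → Continuous ψ₂ → Continuous ψ₂.symm →
        ∀ f : N → A,
          (IsPolyOfDeg Cb ↥(PaperOE ℓ E) d (f ∘ ψ₁.symm) ↔
            IsPolyOfDeg Cb ↥(PaperOE ℓ E) d (f ∘ ψ₂.symm))) := by
  have part1 : ∀ σ : (Fin r → ℤ_[ℓ]) ≃+ (Fin r → ℤ_[ℓ]), Continuous σ → Continuous σ.symm →
      ∀ f : (Fin r → ℤ_[ℓ]) → A,
        IsPolyOfDeg Cb ↥(PaperOE ℓ E) d f → IsPolyOfDeg Cb ↥(PaperOE ℓ E) d (f ∘ σ) := by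
    intro σ hσ _ f hf
    have hcomp : f ∘ σ = fun x => f (fun t => ∑ j, σ (Pi.single j 1) t * x j) := by
      funext x
      rw [Function.comp_apply, PolyAux.equiv_formula Cb hCb_cont hCb_nat r σ hσ x]
    rw [hcomp]
    exact PolyAux.comp_linear Cb hCb_cont hCb_nat r d _ hf
  refine ⟨part1, ?_⟩
  intro N _ _ _ ψ₁ ψ₂ h1 h1' h2 h2' f
  constructor
  · intro hf
    have hσ : Continuous (⇑(ψ₂.symm.trans ψ₁)) := by
      rw [AddEquiv.coe_trans]; exact h1.comp h2'
    have hsymm : (ψ₂.symm.trans ψ₁).symm = ψ₁.symm.trans ψ₂ := by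
      ext x; simp
    have hσ' : Continuous (⇑(ψ₂.symm.trans ψ₁).symm) := by
      rw [hsymm, AddEquiv.coe_trans]; exact h2.comp h1'
    have h := part1 (ψ₂.symm.trans ψ₁) hσ hσ' (f ∘ ψ₁.symm) hf
    have heq : (f ∘ ⇑ψ₁.symm) ∘ ⇑(ψ₂.symm.trans ψ₁) = f ∘ ⇑ψ₂.symm := by
      funext x; simp [Function.comp]
    rwa [heq] at h
  · intro hf
    have hσ : Continuous (⇑(ψ₁.symm.trans ψ₂)) := by
      rw [AddEquiv.coe_trans]; exact h2.comp h1'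
    have hsymm : (ψ₁.symm.trans ψ₂).symm = ψ₂.symm.trans ψ₁ := by
      ext x; simp
    have hσ' : Continuous (⇑(ψ₁.symm.trans ψ₂).symm) := by
      rw [hsymm, AddEquiv.coe_trans]; exact h1.comp h2'
    have h := part1 (ψ₁.symm.trans ψ₂) hσ hσ' (f ∘ ψ₂.symm) hf
    have heq : (f ∘ ⇑ψ₂.symm) ∘ ⇑(ψ₁.symm.trans ψ₂) = f ∘ ⇑ψ₁.symm := by
      funext x; simp [Function.comp]
    rwa [heq] at h
end

section
/- With A, the filtration, the weight w and the ℤ_ℓ-action as in the context, for every d ∈ ℤ and every n ∈ ℕ the map φ ↦ ((x₁,…,x_n) ↦ φ(0,x₁,…,x_n)) is an isomorphism of O_E-modules from Fil^d_w C^n_pol(ℤ_ℓ, A) onto Fil^d_w Pol(ℤ_ℓ^n, A). -/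
open scoped BigOperators

set_option synthInstance.maxHeartbeats 1000000
set_option maxHeartbeats 2000000

/-- The `I`-adic topology on an `O`-module `M`: the topology generated by the cosets
`a + I^k • M`. -/
def adicTopology {O : Type*} [CommRing O] (I : Ideal O) (M : Type*) [AddCommGroup M]
    [Module O M] : TopologicalSpace M :=
  TopologicalSpace.generateFrom
    {s | ∃ (a : M) (k : ℕ), s = {x | x - a ∈ (I ^ k) • (⊤ : Submodule O M)}}

/-- `f : ℤ_ℓ^n → A` lies in `Fil^j_w Pol(ℤ_ℓ^n, A)`: it is a polynomial function (with
respect to the extended binomial coefficients `Cb`) whose coefficient family `c` satisfies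
`c_m ∈ Fil^{j - w·|m|} A` for every multi-index `m`. -/
def IsFilPolZ {ℓ : ℕ} [Fact (Nat.Prime ℓ)] (Cb : ℤ_[ℓ] → ℕ → ℤ_[ℓ])
    {O : Type*} [CommRing O] [Algebra ℤ_[ℓ] O]
    {A : Type*} [AddCommGroup A] [Module O A]
    (Fil : ℤ → Submodule O A) (w : ℕ) (j : ℤ) {n : ℕ} (f : (Fin n → ℤ_[ℓ]) → A) : Prop :=
  ∃ c : (Fin n → ℕ) →₀ A,
    (∀ m : Fin n → ℕ, c m ∈ Fil (j - (w : ℤ) * ∑ t, (m t : ℤ))) ∧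
    ∀ x : Fin n → ℤ_[ℓ], f x = c.sum fun m v => algebraMap ℤ_[ℓ] O (∏ t, Cb (x t) (m t)) • v

/-- `φ : ℤ_ℓ^{n+1} → A` lies in `Fil^d_w C^n_pol(ℤ_ℓ, A)`: it is a polynomial function in
`Fil^d_w Pol(ℤ_ℓ^{n+1}, A)` which is equivariant: `φ(x₀+g,…,x_n+g) = γ^g·φ(x₀,…,x_n)`. -/
def IsFilCpolZ {ℓ : ℕ} [Fact (Nat.Prime ℓ)] (Cb : ℤ_[ℓ] → ℕ → ℤ_[ℓ])
    {O : Type*} [CommRing O] [Algebra ℤ_[ℓ] O]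
    {A : Type*} [AddCommGroup A] [Module O A]
    (Fil : ℤ → Submodule O A) (w : ℕ) (ρ : ℤ_[ℓ] → A → A) (d : ℤ) (n : ℕ)
    (φ : (Fin (n + 1) → ℤ_[ℓ]) → A) : Prop :=
  IsFilPolZ Cb Fil w d φ ∧
    ∀ (g : ℤ_[ℓ]) (x : Fin (n + 1) → ℤ_[ℓ]), φ (fun t => x t + g) = ρ g (φ x)

/-- The differential of homogeneous group cochains:
`dφ(x₀,…,x_{n+1}) = Σ_a (−1)^a φ(x₀,…,x̂_a,…,x_{n+1})`. -/
def gpDiff {G : Type*} {M : Type*} [AddCommGroup M] {n : ℕ}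
    (φ : (Fin (n + 1) → G) → M) : (Fin (n + 2) → G) → M :=
  fun x => ∑ a : Fin (n + 2), ((-1 : ℤ) ^ (a : ℕ)) • φ (fun t => x (a.succAbove t))

set_option linter.unusedSectionVars false

section AuxScalar

variable {ℓ : ℕ} [hp : Fact (Nat.Prime ℓ)]

private lemma aux_one_lt : (1:ℝ) < (ℓ:ℝ) := by exact_mod_cast hp.out.one_lt

private lemma aux_dvd_iff_norm_le {x : ℤ_[ℓ]} {t : ℕ} :
    (ℓ:ℤ_[ℓ])^t ∣ x ↔ ‖x‖ ≤ (ℓ:ℝ)^(-(t:ℤ)) := by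
  rw [PadicInt.norm_le_pow_iff_mem_span_pow, Ideal.mem_span_singleton]

private lemma aux_exists_pow_lt {ε : ℝ} (hε : 0 < ε) : ∃ t : ℕ, (ℓ:ℝ)^(-(t:ℤ)) < ε := by
  have h1 : (ℓ:ℝ)⁻¹ < 1 := by
    rw [inv_lt_one_iff₀]; right; exact aux_one_lt
  obtain ⟨t, ht⟩ := exists_pow_lt_of_lt_one hε h1
  refine ⟨t, ?_⟩
  rwa [zpow_neg, zpow_natCast, ← inv_pow]

private lemma aux_contMod {e : ℤ_[ℓ] → ℤ_[ℓ]} (he : Continuous e) (g₀ : ℤ_[ℓ]) (s : ℕ) :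
    ∃ t : ℕ, ∀ g, (ℓ:ℤ_[ℓ])^t ∣ (g - g₀) → (ℓ:ℤ_[ℓ])^s ∣ (e g - e g₀) := by
  have hε : (0:ℝ) < (ℓ:ℝ)^(-(s:ℤ)) := by
    have h0 : (0:ℝ) < (ℓ:ℝ) := Nat.cast_pos.mpr hp.out.pos
    positivity
  obtain ⟨δ, hδ0, hδ⟩ := Metric.continuous_iff.mp he g₀ _ hε
  obtain ⟨t, ht⟩ := aux_exists_pow_lt (ℓ := ℓ) hδ0
  refine ⟨t, fun g hg => ?_⟩
  have h1 : dist g g₀ < δ := lt_of_le_of_lt (by rw [dist_eq_norm]; exact aux_dvd_iff_norm_le.mp hg) ht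
  have h2 := hδ g h1
  rw [dist_eq_norm] at h2
  exact aux_dvd_iff_norm_le.mpr h2.le

private lemma aux_natApprox (x : ℤ_[ℓ]) (t : ℕ) : ∃ ν : ℕ, (ℓ:ℤ_[ℓ])^t ∣ (x - (ν:ℤ_[ℓ])) := by
  refine ⟨x.appr t, ?_⟩
  have := PadicInt.appr_spec t x
  rwa [Ideal.mem_span_singleton] at this

variable (Cb : ℤ_[ℓ] → ℕ → ℤ_[ℓ])
  (hCb_cont : ∀ k, Continuous fun x => Cb x k)
  (hCb_nat : ∀ n k : ℕ, Cb (n : ℤ_[ℓ]) k = ((n.choose k : ℕ) : ℤ_[ℓ]))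

include hCb_cont hCb_nat

private lemma aux_cb_zero (z : ℤ_[ℓ]) : Cb z 0 = 1 := by
  have h := DenseRange.equalizer (PadicInt.denseRange_natCast)
    (hCb_cont 0) (continuous_const : Continuous fun _ : ℤ_[ℓ] => (1:ℤ_[ℓ]))
    (funext fun n : ℕ => by simp [Function.comp, hCb_nat n 0])
  exact congrFun h z

private lemma aux_cb_zero_ne {k : ℕ} (hk : k ≠ 0) : Cb 0 k = 0 := by
  have h := hCb_nat 0 k
  rw [Nat.cast_zero] at h
  rw [h, Nat.choose_eq_zero_of_lt (Nat.pos_of_ne_zero hk), Nat.cast_zero]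

private lemma aux_cb_pascal (k : ℕ) (z : ℤ_[ℓ]) :
    Cb (z + 1) (k + 1) = Cb z (k + 1) + Cb z k := by
  have h := DenseRange.equalizer (PadicInt.denseRange_natCast)
    (g := fun z : ℤ_[ℓ] => Cb (z + 1) (k + 1))
    (h := fun z : ℤ_[ℓ] => Cb z (k + 1) + Cb z k)
    ((hCb_cont (k+1)).comp (continuous_id.add continuous_const))
    ((hCb_cont (k+1)).add (hCb_cont k))
    (funext fun n : ℕ => by
      have h1 : ((n:ℤ_[ℓ]) + 1) = ((n + 1 : ℕ) : ℤ_[ℓ]) := by push_cast; ring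
      simp only [Function.comp_apply, h1, hCb_nat]
      rw [Nat.choose_succ_succ]
      push_cast
      ring)
  exact congrFun h z

private lemma aux_cb_sub_one (k : ℕ) (z : ℤ_[ℓ]) :
    Cb (z - 1) k = ∑ i ∈ Finset.range (k+1), (-1:ℤ_[ℓ])^(k-i) * Cb z i := by
  induction k generalizing z with
  | zero => simp [aux_cb_zero Cb hCb_cont hCb_nat]
  | succ k ih =>
    have hpas := aux_cb_pascal Cb hCb_cont hCb_nat k (z - 1)
    rw [sub_add_cancel] at hpas
    have h1 : Cb (z-1) (k+1) = Cb z (k+1) - Cb (z-1) k := by linear_combination -hpas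
    rw [h1, ih]
    conv_rhs => rw [Finset.sum_range_succ, Nat.sub_self, pow_zero, one_mul]
    have hterm : ∀ i ∈ Finset.range (k+1),
        (-1:ℤ_[ℓ])^(k+1-i) * Cb z i = -((-1:ℤ_[ℓ])^(k-i) * Cb z i) := by
      intro i hi
      rw [Finset.mem_range] at hi
      have h2 : k+1-i = (k-i)+1 := by omega
      rw [h2, pow_succ]; ring
    rw [Finset.sum_congr rfl hterm, Finset.sum_neg_distrib]
    ring

end AuxScalar

section AuxMod

variable {ℓ : ℕ} [hp : Fact (Nat.Prime ℓ)]
  (O : Type*) [CommRing O] [Algebra ℤ_[ℓ] O]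
  {A : Type*} [AddCommGroup A] [Module O A]

/-- The evaluation of a polynomial coefficient family. -/
noncomputable def auxFamSum (Cb : ℤ_[ℓ] → ℕ → ℤ_[ℓ]) {n : ℕ} (c : (Fin n → ℕ) →₀ A)
    (x : Fin n → ℤ_[ℓ]) : A :=
  c.sum fun m v => algebraMap ℤ_[ℓ] O (∏ t, Cb (x t) (m t)) • v

/-- The family of coefficients of `y ↦ f(y - 1)`. -/
noncomputable def auxShFam (Cb : ℤ_[ℓ] → ℕ → ℤ_[ℓ]) {n : ℕ} (c : (Fin n → ℕ) →₀ A) :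
    (Fin n → ℕ) →₀ A :=
  Finsupp.onFinset
    (c.support.biUnion fun m => Fintype.piFinset fun t => Finset.range (m t + 1))
    (fun ι => ∑ m ∈ c.support.filter (fun m => ∀ t, ι t ≤ m t),
        algebraMap ℤ_[ℓ] O (∏ t, (-1:ℤ_[ℓ])^(m t - ι t)) • c m)
    (fun ι hι => by
      by_contra hmem
      apply hι
      have hempty : c.support.filter (fun m => ∀ t, ι t ≤ m t) = ∅ := by
        refine Finset.filter_eq_empty_iff.mpr (fun {m} hm hle => hmem ?_)
        exact Finset.mem_biUnion.mpr
          ⟨m, hm, Fintype.mem_piFinset.mpr fun t => Finset.mem_range.mpr (Nat.lt_succ_of_le (hle t))⟩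
      simp only [hempty, Finset.sum_empty])

lemma auxFamSum_sub (Cb : ℤ_[ℓ] → ℕ → ℤ_[ℓ]) {n : ℕ} (c c' : (Fin n → ℕ) →₀ A)
    (x : Fin n → ℤ_[ℓ]) :
    auxFamSum O Cb (c - c') x = auxFamSum O Cb c x - auxFamSum O Cb c' x :=
  Finsupp.sum_sub_index (fun a b₁ b₂ => smul_sub _ _ _)

lemma auxFamSum_mem (Cb : ℤ_[ℓ] → ℕ → ℤ_[ℓ]) (Fil : ℤ → Submodule O A) (hmono : Monotone Fil)
    (w : ℕ) {j : ℤ} {n : ℕ} {c : (Fin n → ℕ) →₀ A}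
    (hc : ∀ m : Fin n → ℕ, c m ∈ Fil (j - (w:ℤ) * ∑ t, (m t : ℤ))) (x : Fin n → ℤ_[ℓ]) :
    auxFamSum O Cb c x ∈ Fil j := by
  refine Submodule.sum_mem _ (fun m _ => Submodule.smul_mem _ _ (hmono ?_ (hc m)))
  have h1 : (0:ℤ) ≤ (w:ℤ) * ∑ t, (m t : ℤ) :=
    mul_nonneg (Int.natCast_nonneg w) (Finset.sum_nonneg fun t _ => Int.natCast_nonneg _)
  exact sub_le_self _ h1

lemma auxFamSum_eq_zero (Cb : ℤ_[ℓ] → ℕ → ℤ_[ℓ]) (Fil : ℤ → Submodule O A)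
    (hmono : Monotone Fil) (w : ℕ) {j j₀ : ℤ} (hj : j ≤ j₀) (hbot : Fil j₀ = ⊥) {n : ℕ}
    {c : (Fin n → ℕ) →₀ A}
    (hc : ∀ m : Fin n → ℕ, c m ∈ Fil (j - (w:ℤ) * ∑ t, (m t : ℤ))) (x : Fin n → ℤ_[ℓ]) :
    auxFamSum O Cb c x = 0 := by
  have hc0 : c = 0 := by
    ext m
    have h1 : (0:ℤ) ≤ (w:ℤ) * ∑ t, (m t : ℤ) :=
      mul_nonneg (Int.natCast_nonneg w) (Finset.sum_nonneg fun t _ => Int.natCast_nonneg _)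
    have h2 := hmono (le_trans (sub_le_self j h1) hj) (hc m)
    rw [hbot, Submodule.mem_bot] at h2
    exact h2
  rw [auxFamSum, hc0, Finsupp.sum_zero_index]

lemma aux_rho_famSum (Cb : ℤ_[ℓ] → ℕ → ℤ_[ℓ]) {ρ : ℤ_[ℓ] → A → A}
    (hρ_lin : ∀ g, IsLinearMap O (ρ g)) (g : ℤ_[ℓ]) {n : ℕ} (c : (Fin n → ℕ) →₀ A)
    (x : Fin n → ℤ_[ℓ]) :
    ρ g (auxFamSum O Cb c x) = auxFamSum O Cb (c.mapRange (ρ g) ((hρ_lin g).map_zero)) x := by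
  set L : A →ₗ[O] A := IsLinearMap.mk' (ρ g) (hρ_lin g) with hL
  have h1 : ρ g (auxFamSum O Cb c x) = L (auxFamSum O Cb c x) := rfl
  rw [h1, auxFamSum, map_finsuppSum]
  rw [auxFamSum, Finsupp.sum_mapRange_index (fun m => smul_zero _)]
  exact Finsupp.sum_congr (fun m _ => map_smul L _ _)

lemma auxShFam_eval (Cb : ℤ_[ℓ] → ℕ → ℤ_[ℓ])
    (hCb_cont : ∀ k, Continuous fun x => Cb x k)
    (hCb_nat : ∀ n k : ℕ, Cb (n : ℤ_[ℓ]) k = ((n.choose k : ℕ) : ℤ_[ℓ]))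
    {n : ℕ} (c : (Fin n → ℕ) →₀ A) (x : Fin n → ℤ_[ℓ]) :
    auxFamSum O Cb (auxShFam O Cb c) x = auxFamSum O Cb c (fun t => x t - 1) := by
  rw [auxFamSum, auxShFam, Finsupp.sum_of_support_subset _ Finsupp.support_onFinset_subset _
    (fun i _ => by rw [smul_zero])]
  rw [auxFamSum, Finsupp.sum]
  have hprod : ∀ m : Fin n → ℕ, (∏ t, Cb (x t - 1) (m t)) =
      ∑ ι ∈ Fintype.piFinset (fun t => Finset.range (m t + 1)),
        ∏ t, ((-1:ℤ_[ℓ])^(m t - ι t) * Cb (x t) (ι t)) := by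
    intro m
    calc (∏ t, Cb (x t - 1) (m t))
        = ∏ t, ∑ i ∈ Finset.range (m t + 1), (-1:ℤ_[ℓ])^(m t - i) * Cb (x t) i :=
          Finset.prod_congr rfl fun t _ => aux_cb_sub_one Cb hCb_cont hCb_nat (m t) (x t)
      _ = _ := Finset.prod_univ_sum _ _
  have hstep1 : ∀ m ∈ c.support,
      algebraMap ℤ_[ℓ] O (∏ t, Cb (x t - 1) (m t)) • c m
        = ∑ ι ∈ Fintype.piFinset (fun t => Finset.range (m t + 1)),
            algebraMap ℤ_[ℓ] O (∏ t, ((-1:ℤ_[ℓ])^(m t - ι t) * Cb (x t) (ι t))) • c m := by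
    intro m _
    rw [hprod m, map_sum, Finset.sum_smul]
  rw [Finset.sum_congr rfl hstep1]
  rw [Finset.sum_comm' (s' := fun ι => c.support.filter (fun m => ∀ t, ι t ≤ m t))
    (t' := c.support.biUnion fun m => Fintype.piFinset fun t => Finset.range (m t + 1))
    (by
      intro m ι
      constructor
      · rintro ⟨hm, hι⟩
        refine ⟨Finset.mem_filter.mpr ⟨hm, fun t => Nat.lt_succ_iff.mp (Finset.mem_range.mp
          (Fintype.mem_piFinset.mp hι t))⟩, Finset.mem_biUnion.mpr ⟨m, hm, hι⟩⟩
      · rintro ⟨hm, _⟩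
        obtain ⟨hm1, hm2⟩ := Finset.mem_filter.mp hm
        exact ⟨hm1, Fintype.mem_piFinset.mpr fun t => Finset.mem_range.mpr (Nat.lt_succ_of_le (hm2 t))⟩)]
  refine Finset.sum_congr rfl fun ι _ => ?_
  rw [Finsupp.onFinset_apply, Finset.smul_sum]
  refine Finset.sum_congr rfl fun m _ => ?_
  rw [smul_smul, ← map_mul]
  congr 2
  rw [Finset.prod_mul_distrib]
  ring

lemma auxShFam_sub_self_mem (Cb : ℤ_[ℓ] → ℕ → ℤ_[ℓ]) (Fil : ℤ → Submodule O A)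
    (hmono : Monotone Fil) (w : ℕ) {j : ℤ} {n : ℕ} {c : (Fin n → ℕ) →₀ A}
    (hc : ∀ m : Fin n → ℕ, c m ∈ Fil (j - (w:ℤ) * ∑ t, (m t : ℤ))) (ι : Fin n → ℕ) :
    auxShFam O Cb c ι - c ι ∈ Fil (j - (w:ℤ) - (w:ℤ) * ∑ t, (ι t : ℤ)) := by
  classical
  have hterm : ∀ m : Fin n → ℕ, (∀ t, ι t ≤ m t) → m ≠ ι →
      algebraMap ℤ_[ℓ] O (∏ t, (-1:ℤ_[ℓ])^(m t - ι t)) • c m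
        ∈ Fil (j - (w:ℤ) - (w:ℤ) * ∑ t, (ι t : ℤ)) := by
    intro m hle hne
    refine Submodule.smul_mem _ _ (hmono ?_ (hc m))
    have hs : (∑ t, (ι t : ℤ)) + 1 ≤ ∑ t, (m t : ℤ) := by
      have hlt : ∑ t, (ι t : ℤ) < ∑ t, (m t : ℤ) := by
        obtain ⟨t₀, ht₀⟩ := Function.ne_iff.mp hne
        exact Finset.sum_lt_sum (fun t _ => Int.ofNat_le.mpr (hle t))
          ⟨t₀, Finset.mem_univ t₀, Int.ofNat_lt.mpr (lt_of_le_of_ne (hle t₀) (Ne.symm ht₀))⟩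
      omega
    have hw0 : (0:ℤ) ≤ (w:ℤ) := Int.natCast_nonneg w
    have h2 := mul_le_mul_of_nonneg_left hs hw0
    have h3 : (w:ℤ) * ((∑ t, (ι t : ℤ)) + 1) = (w:ℤ) * ∑ t, (ι t : ℤ) + (w:ℤ) := by ring
    omega
  have happ : auxShFam O Cb c ι = ∑ m ∈ c.support.filter (fun m => ∀ t, ι t ≤ m t),
      algebraMap ℤ_[ℓ] O (∏ t, (-1:ℤ_[ℓ])^(m t - ι t)) • c m := Finsupp.onFinset_apply
  by_cases hi : ι ∈ c.support.filter (fun m => ∀ t, ι t ≤ m t)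
  · have h1 := Finset.add_sum_erase _ (fun m =>
      algebraMap ℤ_[ℓ] O (∏ t, (-1:ℤ_[ℓ])^(m t - ι t)) • c m) hi
    have h2 : algebraMap ℤ_[ℓ] O (∏ t, (-1:ℤ_[ℓ])^(ι t - ι t)) • c ι = c ι := by
      simp [Nat.sub_self]
    rw [happ, ← h1]
    simp only [Nat.sub_self, pow_zero, Finset.prod_const_one, map_one, one_smul,
      add_sub_cancel_left]
    refine Submodule.sum_mem _ (fun m hm => ?_)
    obtain ⟨hne, hmf⟩ := Finset.mem_erase.mp hm
    exact hterm m (Finset.mem_filter.mp hmf).2 hne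
  · have hcι : c ι = 0 := by
      by_contra hne
      exact hi (Finset.mem_filter.mpr ⟨Finsupp.mem_support_iff.mpr hne, fun t => le_refl _⟩)
    rw [happ, hcι, sub_zero]
    refine Submodule.sum_mem _ (fun m hm => ?_)
    obtain ⟨hm1, hm2⟩ := Finset.mem_filter.mp hm
    refine hterm m hm2 (fun heq => ?_)
    exact hi (heq ▸ hm)

/-- The coefficient family of the first difference of `g ↦ ρ g (f (x' - g))`. -/
noncomputable def auxStepFam (Cb : ℤ_[ℓ] → ℕ → ℤ_[ℓ]) (ρ : ℤ_[ℓ] → A → A) (hz : ρ 1 0 = 0)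
    {n : ℕ} (c : (Fin n → ℕ) →₀ A) : (Fin n → ℕ) →₀ A :=
  (auxShFam O Cb c).mapRange (ρ 1) hz - c

lemma auxStepFam_eval (Cb : ℤ_[ℓ] → ℕ → ℤ_[ℓ])
    (hCb_cont : ∀ k, Continuous fun x => Cb x k)
    (hCb_nat : ∀ n k : ℕ, Cb (n : ℤ_[ℓ]) k = ((n.choose k : ℕ) : ℤ_[ℓ]))
    {ρ : ℤ_[ℓ] → A → A} (hρ_add : ∀ g h a, ρ (g + h) a = ρ g (ρ h a))
    (hρ_lin : ∀ g, IsLinearMap O (ρ g))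
    {n : ℕ} (c : (Fin n → ℕ) →₀ A) (x' : Fin n → ℤ_[ℓ]) (g : ℤ_[ℓ]) :
    ρ (g + 1) (auxFamSum O Cb c (fun t => x' t - (g + 1)))
      - ρ g (auxFamSum O Cb c (fun t => x' t - g))
    = ρ g (auxFamSum O Cb (auxStepFam O Cb ρ ((hρ_lin 1).map_zero) c) (fun t => x' t - g)) := by
  have hy : (fun t => x' t - (g + 1)) = fun t => (x' t - g) - 1 := funext fun t => by ring
  rw [hy, ← auxShFam_eval O Cb hCb_cont hCb_nat c (fun t => x' t - g)]
  rw [hρ_add g 1]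
  rw [aux_rho_famSum O Cb hρ_lin 1]
  rw [auxStepFam, auxFamSum_sub]
  rw [(hρ_lin g).map_sub]

lemma auxStepFam_mem (Cb : ℤ_[ℓ] → ℕ → ℤ_[ℓ]) (Fil : ℤ → Submodule O A)
    (hmono : Monotone Fil) (w : ℕ)
    {ρ : ℤ_[ℓ] → A → A} (hρ_lin : ∀ g, IsLinearMap O (ρ g))
    (hρ_fil : ∀ (g : ℤ_[ℓ]) (j : ℤ) (a : A), a ∈ Fil j → ρ g a ∈ Fil j)
    (htriv : ∀ (j : ℤ) (g : ℤ_[ℓ]) (a : A), a ∈ Fil j → ρ g a - a ∈ Fil (j - w))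
    {j : ℤ} {n : ℕ} {c : (Fin n → ℕ) →₀ A}
    (hc : ∀ m : Fin n → ℕ, c m ∈ Fil (j - (w:ℤ) * ∑ t, (m t : ℤ))) (ι : Fin n → ℕ) :
    auxStepFam O Cb ρ ((hρ_lin 1).map_zero) c ι
      ∈ Fil (j - (w:ℤ) - (w:ℤ) * ∑ t, (ι t : ℤ)) := by
  have h1 : auxStepFam O Cb ρ ((hρ_lin 1).map_zero) c ι
      = ρ 1 (auxShFam O Cb c ι - c ι) + (ρ 1 (c ι) - c ι) := by
    rw [(hρ_lin 1).map_sub]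
    simp only [auxStepFam, Finsupp.sub_apply, Finsupp.mapRange_apply]
    abel
  rw [h1]
  refine Submodule.add_mem _ (hρ_fil 1 _ _ (auxShFam_sub_self_mem O Cb Fil hmono w hc ι)) ?_
  have h2 := htriv (j - (w:ℤ) * ∑ t, (ι t : ℤ)) 1 (c ι) (hc ι)
  have h3 : j - (w:ℤ) * ∑ t, (ι t : ℤ) - (w:ℤ) = j - (w:ℤ) - (w:ℤ) * ∑ t, (ι t : ℤ) := by ring
  rwa [h3] at h2

lemma aux_mem_smul_top_iff (J : Ideal O) (N : Submodule O A) (x : ↥N) :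
    x ∈ J • (⊤ : Submodule O ↥N) ↔ (x : A) ∈ J • N := by
  constructor
  · intro hx
    have h1 := Submodule.mem_map_of_mem (f := N.subtype) hx
    rwa [Submodule.map_smul'', Submodule.map_subtype_top] at h1
  · intro hx
    have hmap : J • N = Submodule.map N.subtype (J • ⊤) := by
      rw [Submodule.map_smul'', Submodule.map_subtype_top]
    rw [hmap] at hx
    obtain ⟨y, hy, hxy⟩ := hx
    have h2 : y = x := Subtype.coe_injective hxy
    rwa [h2] at hy

lemma aux_krull_poly {R : Type u} {M : Type v} [CommRing R] [IsNoetherianRing R]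
    [IsLocalRing R] [AddCommGroup M] [Module R M] [Module.Finite R M] (x : M)
    (hx : ∀ s : ℕ, x ∈ ((IsLocalRing.maximalIdeal R) ^ s • ⊤ : Submodule R M)) : x = 0 := by
  haveI : IsNoetherianRing (ULift.{v} R) :=
    isNoetherianRing_of_surjective R (ULift.{v} R)
      ((ULift.ringEquiv.symm : R ≃+* ULift.{v} R).toRingHom) (fun y => ⟨y.down, rfl⟩)
  haveI : IsLocalRing (ULift.{v} R) :=
    IsLocalRing.of_surjective' ((ULift.ringEquiv.symm : R ≃+* ULift.{v} R).toRingHom)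
      (fun y => ⟨y.down, rfl⟩)
  haveI hMfin : Module.Finite (ULift.{v} R) M := by
    obtain ⟨S, hS⟩ := (Module.finite_def.mp ‹Module.Finite R M›)
    have hspan : ∀ y : M, y ∈ Submodule.span (ULift.{v} R) (↑S : Set M) := by
      intro y
      have hy : y ∈ Submodule.span R (↑S : Set M) := by rw [hS]; trivial
      induction hy using Submodule.span_induction with
      | mem z hz => exact Submodule.subset_span hz
      | zero => exact zero_mem _
      | add a b _ _ ha hb => exact add_mem ha hb
      | smul r z _ hz =>
        exact (show (ULift.up r) • z = r • z from rfl) ▸ Submodule.smul_mem _ (ULift.up r) hz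
    exact ⟨⟨S, eq_top_iff.mpr (fun y _ => hspan y)⟩⟩
  haveI : Module.Finite (ULift.{v} R) (ULift.{u} M) :=
    Module.Finite.equiv (ULift.moduleEquiv (R := ULift.{v} R) (M := M)).symm
  have hIdeal : ∀ (s : ℕ) (r : R), r ∈ (IsLocalRing.maximalIdeal R) ^ s →
      ULift.up r ∈ (IsLocalRing.maximalIdeal (ULift.{v} R)) ^ s := by
    intro s r hr
    have hle : Ideal.map (ULift.ringEquiv.symm.toRingHom : R →+* ULift.{v} R)
        (IsLocalRing.maximalIdeal R) ≤ IsLocalRing.maximalIdeal (ULift.{v} R) := by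
      rw [Ideal.map_le_iff_le_comap]
      intro q hq
      rw [Ideal.mem_comap, IsLocalRing.mem_maximalIdeal, mem_nonunits_iff]
      intro hu
      rw [IsLocalRing.mem_maximalIdeal, mem_nonunits_iff] at hq
      exact hq (by simpa using hu.map (ULift.ringEquiv (R := R)).toRingHom)
    have h1 : ULift.up r ∈ Ideal.map (ULift.ringEquiv.symm.toRingHom : R →+* ULift.{v} R)
        ((IsLocalRing.maximalIdeal R) ^ s) := Ideal.mem_map_of_mem _ hr
    rw [Ideal.map_pow] at h1
    exact Ideal.pow_right_mono hle s h1
  have htrans : ∀ (s : ℕ) (y : M), y ∈ ((IsLocalRing.maximalIdeal R) ^ s • ⊤ : Submodule R M) →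
      (ULift.up y : ULift.{u} M) ∈ ((IsLocalRing.maximalIdeal (ULift.{v} R)) ^ s • ⊤ :
        Submodule (ULift.{v} R) (ULift.{u} M)) := by
    intro s y hy
    refine Submodule.smul_induction_on hy (fun r hr z _ => ?_) (fun a b ha hb => ?_)
    · exact (show (ULift.up (r • z) : ULift.{u} M) = (ULift.up r) • (ULift.up z) from rfl) ▸
        Submodule.smul_mem_smul (hIdeal s r hr) Submodule.mem_top
    · exact (show (ULift.up (a + b) : ULift.{u} M) = ULift.up a + ULift.up b from rfl) ▸
        Submodule.add_mem _ ha hb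
  have hbot := Ideal.iInf_pow_smul_eq_bot_of_isLocalRing
    (R := ULift.{v} R) (M := ULift.{u} M) (IsLocalRing.maximalIdeal (ULift.{v} R))
    (Ideal.IsMaximal.ne_top (IsLocalRing.maximalIdeal.isMaximal _))
  have hin : (ULift.up x : ULift.{u} M) ∈ (⨅ i : ℕ,
      (IsLocalRing.maximalIdeal (ULift.{v} R)) ^ i • ⊤ :
        Submodule (ULift.{v} R) (ULift.{u} M)) :=
    (Submodule.mem_iInf _).mpr fun s => htrans s x (hx s)
  rw [hbot, Submodule.mem_bot] at hin
  exact congrArg ULift.down hin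

lemma aux_krull [IsLocalRing O] [IsNoetherianRing O] (Fil : ℤ → Submodule O A)
    (hfg : ∀ j : ℤ, (Fil j).FG) (j : ℤ) (a : A) (haF : a ∈ Fil j)
    (h : ∀ s : ℕ, a ∈ (IsLocalRing.maximalIdeal O) ^ s • Fil j) : a = 0 := by
  haveI : Module.Finite O ↥(Fil j) := Module.Finite.iff_fg.mpr (hfg j)
  have h0 : (⟨a, haF⟩ : ↥(Fil j)) = 0 := by
    refine aux_krull_poly (R := O) (⟨a, haF⟩ : ↥(Fil j)) (fun s => ?_)
    exact (aux_mem_smul_top_iff O _ _ _).mpr (h s)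
  exact congrArg Subtype.val h0

lemma aux_smul_mem_sfil (I : Ideal O) (hℓI : algebraMap ℤ_[ℓ] O ((ℓ:ℕ) : ℤ_[ℓ]) ∈ I)
    {z : ℤ_[ℓ]} {s : ℕ} (hz : ((ℓ:ℕ):ℤ_[ℓ])^s ∣ z) {N : Submodule O A} {a : A} (ha : a ∈ N) :
    algebraMap ℤ_[ℓ] O z • a ∈ I ^ s • N := by
  obtain ⟨z', rfl⟩ := hz
  rw [map_mul, map_pow, mul_smul]
  exact Submodule.smul_mem_smul (Ideal.pow_mem_pow hℓI s) (Submodule.smul_mem _ _ ha)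

lemma aux_rho_smul_mem {ρ : ℤ_[ℓ] → A → A} (hρ_lin : ∀ g, IsLinearMap O (ρ g))
    (Fil : ℤ → Submodule O A)
    (hρ_fil : ∀ (g : ℤ_[ℓ]) (j : ℤ) (a : A), a ∈ Fil j → ρ g a ∈ Fil j)
    (I : Ideal O) {j : ℤ} {s : ℕ} {r : A} (hr : r ∈ I ^ s • Fil j) (g : ℤ_[ℓ]) :
    ρ g r ∈ I ^ s • Fil j := by
  refine Submodule.smul_induction_on hr (fun q hq a ha => ?_) (fun a b ha hb => ?_)
  · rw [(hρ_lin g).map_smul]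
    exact Submodule.smul_mem_smul hq (hρ_fil g _ _ ha)
  · rw [(hρ_lin g).map_add]
    exact Submodule.add_mem _ ha hb

lemma aux_rho_cont (I : Ideal O) (Fil : ℤ → Submodule O A) (ρ : ℤ_[ℓ] → A → A)
    (hρ_fil : ∀ (g : ℤ_[ℓ]) (j : ℤ) (a : A), a ∈ Fil j → ρ g a ∈ Fil j) (j : ℤ)
    (hcontj : letI : TopologicalSpace ↥(Fil j) := adicTopology I ↥(Fil j)
      Continuous fun p : ℤ_[ℓ] × ↥(Fil j) =>
        (⟨ρ p.1 ↑p.2, hρ_fil p.1 j ↑p.2 p.2.2⟩ : ↥(Fil j)))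
    (g₀ : ℤ_[ℓ]) {a₀ : A} (ha₀ : a₀ ∈ Fil j) (s : ℕ) :
    ∃ t : ℕ, ∀ g, ((ℓ:ℕ):ℤ_[ℓ])^t ∣ (g - g₀) → ρ g a₀ - ρ g₀ a₀ ∈ I ^ s • Fil j := by
  letI : TopologicalSpace ↥(Fil j) := adicTopology I ↥(Fil j)
  have hc : Continuous fun g : ℤ_[ℓ] => (⟨ρ g a₀, hρ_fil g j a₀ ha₀⟩ : ↥(Fil j)) := by
    have h0 : Continuous fun g : ℤ_[ℓ] => (g, (⟨a₀, ha₀⟩ : ↥(Fil j))) :=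
      Continuous.prodMk continuous_id continuous_const
    exact hcontj.comp h0
  set U : Set ↥(Fil j) :=
    {x | x - ⟨ρ g₀ a₀, hρ_fil g₀ j a₀ ha₀⟩ ∈ (I ^ s • ⊤ : Submodule O ↥(Fil j))} with hUdef
  have hU : IsOpen U := TopologicalSpace.isOpen_generateFrom_of_mem
    ⟨⟨ρ g₀ a₀, hρ_fil g₀ j a₀ ha₀⟩, s, rfl⟩
  have hpre : IsOpen ((fun g : ℤ_[ℓ] => (⟨ρ g a₀, hρ_fil g j a₀ ha₀⟩ : ↥(Fil j))) ⁻¹' U) :=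
    hU.preimage hc
  have hg₀ : g₀ ∈ (fun g : ℤ_[ℓ] => (⟨ρ g a₀, hρ_fil g j a₀ ha₀⟩ : ↥(Fil j))) ⁻¹' U := by
    show _ ∈ U
    rw [hUdef]
    simp only [Set.mem_setOf_eq, sub_self]
    exact Submodule.zero_mem _
  obtain ⟨ε, hε, hball⟩ := Metric.isOpen_iff.mp hpre g₀ hg₀
  obtain ⟨t, ht⟩ := aux_exists_pow_lt (ℓ := ℓ) hε
  refine ⟨t, fun g hg => ?_⟩
  have hball' : g ∈ Metric.ball g₀ ε := by
    rw [Metric.mem_ball, dist_eq_norm]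
    exact lt_of_le_of_lt (aux_dvd_iff_norm_le.mp hg) ht
  have hmem := hball hball'
  have h2 : ((⟨ρ g a₀, hρ_fil g j a₀ ha₀⟩ : ↥(Fil j))
      - ⟨ρ g₀ a₀, hρ_fil g₀ j a₀ ha₀⟩) ∈ (I ^ s • ⊤ : Submodule O ↥(Fil j)) := hmem
  have h3 := (aux_mem_smul_top_iff O _ _ _).mp h2
  simpa using h3

lemma aux_mahler1 (Cb : ℤ_[ℓ] → ℕ → ℤ_[ℓ])
    (hCb_cont : ∀ k, Continuous fun x => Cb x k)
    (hCb_nat : ∀ n k : ℕ, Cb (n : ℤ_[ℓ]) k = ((n.choose k : ℕ) : ℤ_[ℓ]))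
    (Fil : ℤ → Submodule O A) (hmono : Monotone Fil) (w : ℕ)
    (I : Ideal O) (hℓI : algebraMap ℤ_[ℓ] O ((ℓ:ℕ) : ℤ_[ℓ]) ∈ I)
    (hkrull : ∀ (j : ℤ) (a : A), a ∈ Fil j → (∀ s : ℕ, a ∈ I ^ s • Fil j) → a = 0)
    (j : ℤ) (N : ℕ) (U : ℕ → ℤ_[ℓ] → A)
    (hstep : ∀ (k : ℕ) (g : ℤ_[ℓ]), U k (g + 1) - U k g = U (k + 1) g)
    (hFil : ∀ (k : ℕ) (g : ℤ_[ℓ]), U k g ∈ Fil (j - (w:ℤ) * (k:ℤ)))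
    (hvan : ∀ g, U N g = 0)
    (hAC : ∀ g s, ∃ t : ℕ, ∀ g', ((ℓ:ℕ):ℤ_[ℓ])^t ∣ (g' - g) →
      U 0 g' - U 0 g ∈ I ^ s • Fil j)
    (g : ℤ_[ℓ]) :
    U 0 g = ∑ k ∈ Finset.range N, algebraMap ℤ_[ℓ] O (Cb g k) • U k 0 := by
  have hFil' : ∀ k g', U k g' ∈ Fil j := by
    intro k g'
    refine hmono ?_ (hFil k g')
    have : (0:ℤ) ≤ (w:ℤ) * k := mul_nonneg (Int.natCast_nonneg w) (Int.natCast_nonneg k)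
    exact sub_le_self _ this
  have hiter : ∀ k, (fwdDiff (1:ℤ_[ℓ]))^[k] (U 0) = U k := by
    intro k
    induction k with
    | zero => rfl
    | succ k ih =>
      rw [Function.iterate_succ_apply', ih]
      funext h
      exact hstep k h
  have hUz : ∀ k, N ≤ k → ∀ g', U k g' = 0 := by
    intro k hk
    induction k, hk using Nat.le_induction with
    | base => exact hvan
    | succ k hk ih =>
      intro g'
      rw [← hstep k g', ih, ih, sub_zero]
  have hnat : ∀ ν : ℕ, U 0 ((ν : ℕ) : ℤ_[ℓ])
      = ∑ k ∈ Finset.range N, algebraMap ℤ_[ℓ] O (Cb ((ν : ℕ) : ℤ_[ℓ]) k) • U k 0 := by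
    intro ν
    have h1 := shift_eq_sum_fwdDiff_iter (1:ℤ_[ℓ]) (U 0) ν 0
    simp only [zero_add, nsmul_eq_mul, mul_one] at h1
    rw [h1]
    have e1 : ∀ k, (ν.choose k) • (fwdDiff (1:ℤ_[ℓ]))^[k] (U 0) 0
        = algebraMap ℤ_[ℓ] O (Cb ((ν:ℕ):ℤ_[ℓ]) k) • U k 0 := by
      intro k
      rw [hiter, hCb_nat, map_natCast, Nat.cast_smul_eq_nsmul]
    calc ∑ k ∈ Finset.range (ν + 1), (ν.choose k) • (fwdDiff (1:ℤ_[ℓ]))^[k] (U 0) 0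
        = ∑ k ∈ Finset.range (max (ν + 1) N), (ν.choose k) • (fwdDiff (1:ℤ_[ℓ]))^[k] (U 0) 0 := by
          refine Finset.sum_subset (Finset.range_subset_range.mpr (le_max_left _ _)) ?_
          intro k _ hk
          rw [Finset.mem_range, not_lt] at hk
          rw [Nat.choose_eq_zero_of_lt (by omega), zero_smul]
      _ = ∑ k ∈ Finset.range (max (ν + 1) N),
            algebraMap ℤ_[ℓ] O (Cb ((ν:ℕ):ℤ_[ℓ]) k) • U k 0 :=
          Finset.sum_congr rfl fun k _ => e1 k
      _ = ∑ k ∈ Finset.range N, algebraMap ℤ_[ℓ] O (Cb ((ν:ℕ):ℤ_[ℓ]) k) • U k 0 := by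
          refine (Finset.sum_subset (Finset.range_subset_range.mpr (le_max_right _ _)) ?_).symm
          intro k _ hk
          rw [Finset.mem_range, not_lt] at hk
          rw [hUz k hk, smul_zero]
  set W : A := U 0 g - ∑ k ∈ Finset.range N, algebraMap ℤ_[ℓ] O (Cb g k) • U k 0 with hW
  have hWfil : W ∈ Fil j := by
    refine Submodule.sub_mem _ (hFil' 0 g) (Submodule.sum_mem _ fun k _ => ?_)
    exact Submodule.smul_mem _ _ (hFil' k 0)
  have hall : ∀ s : ℕ, W ∈ I ^ s • Fil j := by
    intro s
    obtain ⟨t₀, ht₀⟩ := hAC g s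
    have hm : ∀ k, ∃ t : ℕ, ∀ g', ((ℓ:ℕ):ℤ_[ℓ])^t ∣ (g' - g) →
        ((ℓ:ℕ):ℤ_[ℓ])^s ∣ (Cb g' k - Cb g k) := fun k => aux_contMod (hCb_cont k) g s
    choose tf htf using hm
    set T := t₀ ⊔ (Finset.range N).sup tf with hT
    obtain ⟨ν, hν⟩ := aux_natApprox g T
    have hνg : ∀ t, t ≤ T → ((ℓ:ℕ):ℤ_[ℓ])^t ∣ (((ν:ℕ):ℤ_[ℓ]) - g) := by
      intro t ht
      have h1 : ((ℓ:ℕ):ℤ_[ℓ])^T ∣ (((ν:ℕ):ℤ_[ℓ]) - g) := by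
        have := dvd_neg.mpr hν
        rwa [neg_sub] at this
      exact (pow_dvd_pow _ ht).trans h1
    have hWeq : W = -(U 0 ((ν:ℕ):ℤ_[ℓ]) - U 0 g)
        + ∑ k ∈ Finset.range N, algebraMap ℤ_[ℓ] O (Cb ((ν:ℕ):ℤ_[ℓ]) k - Cb g k) • U k 0 := by
      simp only [map_sub, sub_smul, Finset.sum_sub_distrib]
      rw [← hnat ν, hW]
      abel
    rw [hWeq]
    refine Submodule.add_mem _ (Submodule.neg_mem _ (ht₀ _ (hνg t₀ le_sup_left)))
      (Submodule.sum_mem _ fun k hk => ?_)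
    refine aux_smul_mem_sfil O I hℓI ?_ (hFil' k 0)
    exact htf k _ (hνg (tf k) (le_trans (Finset.le_sup hk) le_sup_right))
  have := hkrull j W hWfil hall
  rw [hW] at this
  exact sub_eq_zero.mp this

lemma aux_restrict (Cb : ℤ_[ℓ] → ℕ → ℤ_[ℓ])
    (hCb_cont : ∀ k, Continuous fun x => Cb x k)
    (hCb_nat : ∀ n k : ℕ, Cb (n : ℤ_[ℓ]) k = ((n.choose k : ℕ) : ℤ_[ℓ]))
    (Fil : ℤ → Submodule O A) (w : ℕ) (d : ℤ) {n : ℕ}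
    {φ : (Fin (n+1) → ℤ_[ℓ]) → A} (hφ : IsFilPolZ Cb Fil w d φ) :
    IsFilPolZ Cb Fil w d (fun x : Fin n → ℤ_[ℓ] => φ (Fin.cons 0 x)) := by
  classical
  obtain ⟨c, hcl, hce⟩ := hφ
  have hinj : Function.Injective (Fin.cons (α := fun _ : Fin (n+1) => ℕ) 0) :=
    Fin.cons_right_injective 0
  refine ⟨Finsupp.comapDomain (Fin.cons (α := fun _ : Fin (n+1) => ℕ) 0) c hinj.injOn,
    fun m => ?_, fun x => ?_⟩
  · rw [Finsupp.comapDomain_apply]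
    have h1 := hcl (Fin.cons 0 m)
    have h2 : ∑ t : Fin (n+1), ((Fin.cons 0 m : Fin (n+1) → ℕ) t : ℤ) = ∑ t : Fin n, (m t : ℤ) := by
      rw [Fin.sum_univ_succ]
      simp
    rwa [h2] at h1
  · show φ (Fin.cons 0 x) = _
    rw [hce, Finsupp.sum, Finsupp.sum]
    rw [← Finset.sum_filter_of_ne (p := fun m : Fin (n+1) → ℕ => m 0 = 0)
      (fun m hm hne => by
        by_contra h0
        apply hne
        have hz : Cb ((Fin.cons 0 x : Fin (n+1) → ℤ_[ℓ]) 0) (m 0) = 0 := by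
          rw [Fin.cons_zero]
          exact aux_cb_zero_ne Cb hCb_cont hCb_nat h0
        rw [show (∏ t, Cb ((Fin.cons 0 x : Fin (n+1) → ℤ_[ℓ]) t) (m t)) = 0 from
          Finset.prod_eq_zero (Finset.mem_univ 0) hz, map_zero, zero_smul])]
    refine Finset.sum_nbij' (fun m => Fin.tail m) (fun m' => Fin.cons 0 m') ?_ ?_ ?_ ?_ ?_
    · intro m hm
      obtain ⟨hm1, hm2⟩ := Finset.mem_filter.mp hm
      rw [Finsupp.mem_support_iff, Finsupp.comapDomain_apply]
      have hcons : Fin.cons 0 (Fin.tail m) = m := by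
        conv_rhs => rw [← Fin.cons_self_tail m]
        rw [hm2]
      rw [hcons]
      exact Finsupp.mem_support_iff.mp hm1
    · intro m' hm'
      rw [Finsupp.mem_support_iff, Finsupp.comapDomain_apply] at hm'
      refine Finset.mem_filter.mpr ⟨Finsupp.mem_support_iff.mpr hm', Fin.cons_zero _ _⟩
    · intro m hm
      obtain ⟨_, hm2⟩ := Finset.mem_filter.mp hm
      conv_rhs => rw [← Fin.cons_self_tail m]
      rw [hm2]
    · intro m' _
      exact Fin.tail_cons _ _
    · intro m hm
      obtain ⟨hm1, hm2⟩ := Finset.mem_filter.mp hm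
      have hcons : Fin.cons 0 (Fin.tail m) = m := by
        conv_rhs => rw [← Fin.cons_self_tail m]
        rw [hm2]
      rw [Finsupp.comapDomain_apply, hcons]
      congr 1
      rw [Fin.prod_univ_succ]
      have hz : Cb ((Fin.cons 0 x : Fin (n+1) → ℤ_[ℓ]) 0) (m 0) = 1 := by
        rw [Fin.cons_zero, hm2]
        exact aux_cb_zero Cb hCb_cont hCb_nat 0
      rw [hz, one_mul]
      congr 1

lemma aux_surj (Cb : ℤ_[ℓ] → ℕ → ℤ_[ℓ])
    (hCb_cont : ∀ k, Continuous fun x => Cb x k)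
    (hCb_nat : ∀ n k : ℕ, Cb (n : ℤ_[ℓ]) k = ((n.choose k : ℕ) : ℤ_[ℓ]))
    (Fil : ℤ → Submodule O A) (hmono : Monotone Fil) (hbot : ∃ j₀ : ℤ, Fil j₀ = ⊥)
    (w : ℕ) (hw : 0 < w)
    (ρ : ℤ_[ℓ] → A → A)
    (hρ_zero : ∀ a, ρ 0 a = a)
    (hρ_add : ∀ g h a, ρ (g + h) a = ρ g (ρ h a))
    (hρ_lin : ∀ g, IsLinearMap O (ρ g))
    (hρ_fil : ∀ (g : ℤ_[ℓ]) (j : ℤ) (a : A), a ∈ Fil j → ρ g a ∈ Fil j)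
    (htriv : ∀ (j : ℤ) (g : ℤ_[ℓ]) (a : A), a ∈ Fil j → ρ g a - a ∈ Fil (j - w))
    (I : Ideal O) (hℓI : algebraMap ℤ_[ℓ] O ((ℓ:ℕ):ℤ_[ℓ]) ∈ I)
    (hkrull : ∀ (j : ℤ) (a : A), a ∈ Fil j → (∀ s : ℕ, a ∈ I ^ s • Fil j) → a = 0)
    (hHC : ∀ (j : ℤ) (g₀ : ℤ_[ℓ]) (a₀ : A), a₀ ∈ Fil j → ∀ s : ℕ,
      ∃ t : ℕ, ∀ g, ((ℓ:ℕ):ℤ_[ℓ])^t ∣ (g - g₀) → ρ g a₀ - ρ g₀ a₀ ∈ I ^ s • Fil j)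
    (d : ℤ) {n : ℕ} (c : (Fin n → ℕ) →₀ A)
    (hc : ∀ m : Fin n → ℕ, c m ∈ Fil (d - (w:ℤ) * ∑ t, (m t : ℤ))) :
    IsFilPolZ Cb Fil w d (fun x : Fin (n+1) → ℤ_[ℓ] =>
      ρ (x 0) (auxFamSum O Cb c (fun t => x t.succ - x 0))) := by
  classical
  obtain ⟨j₀, hj₀⟩ := hbot
  set N : ℕ := (d - j₀).toNat with hNdef
  have hN : d - (w:ℤ) * (N:ℤ) ≤ j₀ := by
    have h1 : (d - j₀) ≤ ((d - j₀).toNat : ℤ) := Int.self_le_toNat _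
    have h2 : (N:ℤ) ≤ (w:ℤ) * (N:ℤ) :=
      le_mul_of_one_le_left (Int.natCast_nonneg N) (by exact_mod_cast hw)
    omega
  set SF : ((Fin n → ℕ) →₀ A) → ((Fin n → ℕ) →₀ A) :=
    auxStepFam O Cb ρ ((hρ_lin 1).map_zero) with hSF
  set cs : ℕ → ((Fin n → ℕ) →₀ A) := fun k => SF^[k] c with hcs
  have hcs0 : cs 0 = c := rfl
  have hcs_succ : ∀ k, cs (k+1) = SF (cs k) := fun k => Function.iterate_succ_apply' SF k c
  have hlev : ∀ (k : ℕ) (m : Fin n → ℕ),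
      cs k m ∈ Fil (d - (w:ℤ)*(k:ℤ) - (w:ℤ) * ∑ t, (m t:ℤ)) := by
    intro k
    induction k with
    | zero => intro m; simpa [hcs0] using hc m
    | succ k ih =>
      intro m
      rw [hcs_succ]
      have h1 := auxStepFam_mem O Cb Fil hmono w hρ_lin hρ_fil htriv
        (j := d - (w:ℤ)*(k:ℤ)) (c := cs k) ih m
      have h2 : d - (w:ℤ)*(k:ℤ) - (w:ℤ) - (w:ℤ) * ∑ t, (m t:ℤ)
          = d - (w:ℤ)*((k+1:ℕ):ℤ) - (w:ℤ) * ∑ t, (m t:ℤ) := by push_cast; ring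
      rwa [h2] at h1
  have hval : ∀ (k : ℕ) (y : Fin n → ℤ_[ℓ]),
      auxFamSum O Cb (cs k) y ∈ Fil (d - (w:ℤ)*(k:ℤ)) :=
    fun k y => auxFamSum_mem O Cb Fil hmono w (hlev k) y
  have key : ∀ (x' : Fin n → ℤ_[ℓ]) (g : ℤ_[ℓ]),
      ρ g (auxFamSum O Cb c (fun t => x' t - g))
        = ∑ k ∈ Finset.range N, algebraMap ℤ_[ℓ] O (Cb g k) • auxFamSum O Cb (cs k) x' := by
    intro x' g
    set U : ℕ → ℤ_[ℓ] → A := fun k h => ρ h (auxFamSum O Cb (cs k) (fun t => x' t - h)) with hU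
    have hstepU : ∀ (k : ℕ) (h : ℤ_[ℓ]), U k (h + 1) - U k h = U (k + 1) h := by
      intro k h
      simp only [hU]
      rw [hcs_succ k]
      exact auxStepFam_eval O Cb hCb_cont hCb_nat hρ_add hρ_lin (cs k) x' h
    have hFilU : ∀ (k : ℕ) (h : ℤ_[ℓ]), U k h ∈ Fil (d - (w:ℤ)*(k:ℤ)) := by
      intro k h
      simp only [hU]
      exact hρ_fil h _ _ (hval k _)
    have hvanU : ∀ h, U N h = 0 := by
      intro h
      simp only [hU]
      rw [auxFamSum_eq_zero O Cb Fil hmono w hN hj₀ (hlev N)]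
      exact (hρ_lin h).map_zero
    have hacU : ∀ gg s, ∃ t : ℕ, ∀ g', ((ℓ:ℕ):ℤ_[ℓ])^t ∣ (g' - gg) →
        U 0 g' - U 0 gg ∈ I ^ s • Fil d := by
      intro gg s
      set b := auxFamSum O Cb c (fun t => x' t - gg) with hbdef
      have hbmem : b ∈ Fil d := by
        have h3 := hval 0 (fun t => x' t - gg)
        rw [hcs0] at h3
        simpa using h3
      obtain ⟨t₂, ht₂⟩ := hHC d gg b hbmem s
      have hm : ∀ m : Fin n → ℕ, ∃ t : ℕ, ∀ g', ((ℓ:ℕ):ℤ_[ℓ])^t ∣ (g' - gg) →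
          ((ℓ:ℕ):ℤ_[ℓ])^s ∣ ((∏ t', Cb (x' t' - g') (m t')) - (∏ t', Cb (x' t' - gg) (m t'))) := by
        intro m
        refine aux_contMod ?_ gg s
        exact continuous_finset_prod _ (fun t' _ =>
          (hCb_cont (m t')).comp (continuous_const.sub continuous_id))
      choose tf htf using hm
      refine ⟨t₂ ⊔ c.support.sup tf, fun g' hdvd => ?_⟩
      have hd₂ : ((ℓ:ℕ):ℤ_[ℓ])^t₂ ∣ g' - gg := (pow_dvd_pow _ le_sup_left).trans hdvd
      have hsplit : U 0 g' - U 0 gg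
          = ρ g' (auxFamSum O Cb c (fun t => x' t - g') - b) + (ρ g' b - ρ gg b) := by
        simp only [hU, hcs0]
        rw [(hρ_lin g').map_sub, hbdef]
        abel
      rw [hsplit]
      refine Submodule.add_mem _ ?_ (ht₂ g' hd₂)
      refine aux_rho_smul_mem O hρ_lin Fil hρ_fil I ?_ g'
      have hdiff : auxFamSum O Cb c (fun t => x' t - g') - b
          = ∑ m ∈ c.support, algebraMap ℤ_[ℓ] O
              ((∏ t', Cb (x' t' - g') (m t')) - (∏ t', Cb (x' t' - gg) (m t'))) • c m := by
        rw [hbdef, auxFamSum, auxFamSum, Finsupp.sum, Finsupp.sum, ← Finset.sum_sub_distrib]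
        exact Finset.sum_congr rfl fun m _ => by rw [map_sub, sub_smul]
      rw [hdiff]
      refine Submodule.sum_mem _ fun m hmem => ?_
      refine aux_smul_mem_sfil O I hℓI
        (htf m g' ((pow_dvd_pow _ (le_trans (Finset.le_sup hmem) le_sup_right)).trans hdvd)) ?_
      exact hmono (sub_le_self _ (mul_nonneg (Int.natCast_nonneg w)
        (Finset.sum_nonneg fun t _ => Int.natCast_nonneg _))) (hc m)
    have hmain := aux_mahler1 O Cb hCb_cont hCb_nat Fil hmono w I hℓI hkrull d N U
      hstepU hFilU hvanU hacU g
    simp only [hU, hcs0] at hmain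
    rw [hmain]
    refine Finset.sum_congr rfl fun k _ => ?_
    congr 1
    rw [hρ_zero]
    congr 1
    funext t
    rw [sub_zero]
  refine ⟨Finsupp.onFinset
      ((Finset.range N).biUnion fun k => (cs k).support.image (Fin.cons k))
      (fun ι => if h : ι 0 < N then cs (ι 0) (Fin.tail ι) else 0)
      (fun ι hι => ?_), fun ι => ?_, fun x => ?_⟩
  · by_cases h : ι 0 < N
    · simp only [dif_pos h] at hι
      refine Finset.mem_biUnion.mpr ⟨ι 0, Finset.mem_range.mpr h, Finset.mem_image.mpr
        ⟨Fin.tail ι, Finsupp.mem_support_iff.mpr hι, Fin.cons_self_tail ι⟩⟩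
    · simp only [dif_neg h] at hι
      exact absurd rfl hι
  · rw [Finsupp.onFinset_apply]
    by_cases h : ι 0 < N
    · simp only [dif_pos h]
      have h1 := hlev (ι 0) (Fin.tail ι)
      have h2 : ∑ t : Fin (n+1), (ι t : ℤ)
          = (ι 0 : ℤ) + ∑ t : Fin n, ((Fin.tail ι) t : ℤ) := Fin.sum_univ_succ _
      rw [h2]
      have h3 : d - (w:ℤ) * ((ι 0 : ℤ) + ∑ t : Fin n, ((Fin.tail ι) t : ℤ))
          = d - (w:ℤ)*(ι 0:ℤ) - (w:ℤ) * ∑ t : Fin n, ((Fin.tail ι) t : ℤ) := by ring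
      rw [h3]
      exact h1
    · simp only [dif_neg h]
      exact Submodule.zero_mem _
  · show ρ (x 0) (auxFamSum O Cb c (fun t => x t.succ - x 0)) = _
    rw [key (fun t => x t.succ) (x 0)]
    rw [Finsupp.sum_of_support_subset _ Finsupp.support_onFinset_subset _
      (fun i _ => smul_zero _)]
    rw [Finset.sum_biUnion (fun k1 _ k2 _ hne => Finset.disjoint_left.mpr
      (fun ι hι1 hι2 => by
        obtain ⟨m1, _, hm1⟩ := Finset.mem_image.mp hι1
        obtain ⟨m2, _, hm2⟩ := Finset.mem_image.mp hι2
        exact hne ((congrFun hm1 0).trans (congrFun hm2 0).symm)))]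
    refine Finset.sum_congr rfl fun k hk => ?_
    have hinj2 : ∀ m₁ ∈ (cs k).support, ∀ m₂ ∈ (cs k).support,
        Fin.cons (α := fun _ : Fin (n+1) => ℕ) k m₁
          = Fin.cons (α := fun _ : Fin (n+1) => ℕ) k m₂ → m₁ = m₂ :=
      fun m₁ _ m₂ _ h => Fin.cons_right_injective (α := fun _ : Fin (n+1) => ℕ) k h
    rw [Finset.sum_image hinj2]
    rw [auxFamSum, Finsupp.sum, Finset.smul_sum]
    refine Finset.sum_congr rfl fun m hm => ?_
    simp only [Finsupp.onFinset_apply]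
    simp only [Fin.cons_zero, Fin.tail_cons]
    rw [dif_pos (Finset.mem_range.mp hk)]
    rw [Fin.prod_univ_succ]
    simp only [Fin.cons_zero, Fin.cons_succ]
    rw [map_mul, mul_smul]

end AuxMod

/-!
STATEMENT 5 (Lemma `lem:Fil_Cpol_Fil_Pol_Zell` of the paper).

With `A` a filtered `O_E[ℤ_ℓ]`-module as in the context (the filtration is exhaustive
below: `Fil^{j₀} A = 0` for some `j₀`; each `Fil^j A` is a finitely generated
`O_E`-module; the `ℤ_ℓ`-action is continuous on each `Fil^j A` for the `m_E`-adic
topology and is trivial on each `Fil^j A / Fil^{j-w} A`), for every `d ∈ ℤ` and `n ∈ ℕ`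
the map `φ ↦ ((x₁,…,x_n) ↦ φ(0,x₁,…,x_n))` is an isomorphism of `O_E`-modules from
`Fil^d_w C^n_pol(ℤ_ℓ, A)` onto `Fil^d_w Pol(ℤ_ℓ^n, A)`; we express this by saying that it
is well defined, injective and surjective (it is the restriction of an evidently
`O_E`-linear map on ambient function spaces).
-/
theorem filCpolZ_equiv_filPolZ
    (ℓ : ℕ) [Fact (Nat.Prime ℓ)]
    (E : Type*) [Field E] [Algebra ℚ_[ℓ] E] [FiniteDimensional ℚ_[ℓ] E]
    [Algebra ℤ_[ℓ] E] [IsScalarTower ℤ_[ℓ] ℚ_[ℓ] E] [IsLocalRing ↥(PaperOE ℓ E)]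
    (Cb : ℤ_[ℓ] → ℕ → ℤ_[ℓ])
    (hCb_cont : ∀ k, Continuous fun x => Cb x k)
    (hCb_nat : ∀ n k : ℕ, Cb (n : ℤ_[ℓ]) k = ((n.choose k : ℕ) : ℤ_[ℓ]))
    (A : Type*) [AddCommGroup A] [Module ↥(PaperOE ℓ E) A]
    (Fil : ℤ → Submodule ↥(PaperOE ℓ E) A) (hmono : Monotone Fil)
    (hbot : ∃ j₀ : ℤ, Fil j₀ = ⊥)
    (w : ℕ) (hw : 0 < w)
    (ρ : ℤ_[ℓ] → A → A)
    (hρ_zero : ∀ a, ρ 0 a = a)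
    (hρ_add : ∀ g h a, ρ (g + h) a = ρ g (ρ h a))
    (hρ_lin : ∀ g, IsLinearMap ↥(PaperOE ℓ E) (ρ g))
    (hρ_fil : ∀ (g : ℤ_[ℓ]) (j : ℤ) (a : A), a ∈ Fil j → ρ g a ∈ Fil j)
    (hfg : ∀ j, (Fil j).FG)
    (hcont : ∀ j : ℤ,
      letI : TopologicalSpace ↥(Fil j) :=
        adicTopology (IsLocalRing.maximalIdeal ↥(PaperOE ℓ E)) ↥(Fil j)
      Continuous fun p : ℤ_[ℓ] × ↥(Fil j) =>
        (⟨ρ p.1 ↑p.2, hρ_fil p.1 j ↑p.2 p.2.2⟩ : ↥(Fil j)))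
    (htriv : ∀ (j : ℤ) (g : ℤ_[ℓ]) (a : A), a ∈ Fil j → ρ g a - a ∈ Fil (j - w))
    (d : ℤ) (n : ℕ) :
    (∀ φ : (Fin (n + 1) → ℤ_[ℓ]) → A, IsFilCpolZ Cb Fil w ρ d n φ →
      IsFilPolZ Cb Fil w d fun x : Fin n → ℤ_[ℓ] => φ (Fin.cons 0 x)) ∧
    (∀ φ φ' : (Fin (n + 1) → ℤ_[ℓ]) → A, IsFilCpolZ Cb Fil w ρ d n φ →
      IsFilCpolZ Cb Fil w ρ d n φ' →
      (fun x : Fin n → ℤ_[ℓ] => φ (Fin.cons 0 x)) =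
        (fun x : Fin n → ℤ_[ℓ] => φ' (Fin.cons 0 x)) → φ = φ') ∧
    (∀ f : (Fin n → ℤ_[ℓ]) → A, IsFilPolZ Cb Fil w d f →
      ∃ φ : (Fin (n + 1) → ℤ_[ℓ]) → A, IsFilCpolZ Cb Fil w ρ d n φ ∧
        ∀ x : Fin n → ℤ_[ℓ], φ (Fin.cons 0 x) = f x) := by
  classical
  haveI hchar : CharZero E := charZero_of_injective_algebraMap (algebraMap ℚ_[ℓ] E).injective
  haveI : Algebra.IsAlgebraic ℚ_[ℓ] E := Algebra.IsAlgebraic.of_finite ℚ_[ℓ] E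
  haveI : IsIntegralClosure ↥(PaperOE ℓ E) ℤ_[ℓ] E := integralClosure.isIntegralClosure ℤ_[ℓ] E
  haveI : IsNoetherianRing ↥(PaperOE ℓ E) :=
    IsIntegralClosure.isNoetherianRing ℤ_[ℓ] ℚ_[ℓ] E ↥(PaperOE ℓ E)
  have hℓunit : ¬ IsUnit ((ℓ:ℕ) : ℤ_[ℓ]) := by
    rw [PadicInt.isUnit_iff]
    have h1 : ‖((ℓ:ℕ):ℤ_[ℓ])‖ < 1 := by
      rw [PadicInt.norm_p]
      have h2 : (1:ℝ) < (ℓ:ℝ) := by exact_mod_cast (Fact.out : Nat.Prime ℓ).one_lt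
      rw [inv_lt_one_iff₀]
      right
      exact h2
    intro h
    rw [h] at h1
    exact lt_irrefl 1 h1
  have hℓI : algebraMap ℤ_[ℓ] ↥(PaperOE ℓ E) ((ℓ:ℕ):ℤ_[ℓ])
      ∈ IsLocalRing.maximalIdeal ↥(PaperOE ℓ E) := by
    rw [IsLocalRing.mem_maximalIdeal, mem_nonunits_iff]
    intro hu
    obtain ⟨u, hu'⟩ := hu
    have hinv : ((u⁻¹ : (↥(PaperOE ℓ E))ˣ) : ↥(PaperOE ℓ E))
        * algebraMap ℤ_[ℓ] ↥(PaperOE ℓ E) ((ℓ:ℕ):ℤ_[ℓ]) = 1 := by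
      rw [← hu']
      exact u.inv_mul
    have hE : (((u⁻¹ : (↥(PaperOE ℓ E))ˣ) : ↥(PaperOE ℓ E)) : E)
        * algebraMap ℤ_[ℓ] E ((ℓ:ℕ):ℤ_[ℓ]) = 1 := by
      have h2 := congrArg (fun z : ↥(PaperOE ℓ E) => (z : E)) hinv
      simpa using h2
    set q : ℚ_[ℓ] := algebraMap ℤ_[ℓ] ℚ_[ℓ] ((ℓ:ℕ):ℤ_[ℓ]) with hq
    have hq0 : q ≠ 0 := by
      rw [hq]
      intro h0
      have h1 : ((ℓ:ℕ):ℤ_[ℓ]) = 0 := IsFractionRing.injective ℤ_[ℓ] ℚ_[ℓ] (by rw [h0, map_zero])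
      have h2 : ((ℓ:ℕ):ℤ_[ℓ]) ≠ 0 := Nat.cast_ne_zero.mpr (Fact.out : Nat.Prime ℓ).ne_zero
      exact h2 h1
    have htower : algebraMap ℤ_[ℓ] E ((ℓ:ℕ):ℤ_[ℓ]) = algebraMap ℚ_[ℓ] E q :=
      IsScalarTower.algebraMap_apply ℤ_[ℓ] ℚ_[ℓ] E _
    have hv : (((u⁻¹ : (↥(PaperOE ℓ E))ˣ) : ↥(PaperOE ℓ E)) : E) = algebraMap ℚ_[ℓ] E q⁻¹ := by
      rw [map_inv₀]
      refine eq_inv_of_mul_eq_one_left ?_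
      rw [← htower]
      exact hE
    have hint : IsIntegral ℤ_[ℓ] ((((u⁻¹ : (↥(PaperOE ℓ E))ˣ) : ↥(PaperOE ℓ E))) : E) :=
      (mem_integralClosure_iff ℤ_[ℓ] E).mp ((u⁻¹ : (↥(PaperOE ℓ E))ˣ) : ↥(PaperOE ℓ E)).2
    rw [hv] at hint
    rw [isIntegral_algebraMap_iff ((algebraMap ℚ_[ℓ] E).injective)] at hint
    obtain ⟨y, hy⟩ := IsIntegrallyClosed.isIntegral_iff.mp hint
    have hy1 : y * ((ℓ:ℕ):ℤ_[ℓ]) = 1 := by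
      apply IsFractionRing.injective ℤ_[ℓ] ℚ_[ℓ]
      rw [map_mul, map_one, hy, ← hq, inv_mul_cancel₀ hq0]
    exact hℓunit (IsUnit.of_mul_eq_one _ (by rw [mul_comm]; exact hy1))
  have hkrull : ∀ (j : ℤ) (a : A), a ∈ Fil j →
      (∀ s : ℕ, a ∈ (IsLocalRing.maximalIdeal ↥(PaperOE ℓ E)) ^ s • Fil j) → a = 0 :=
    fun j a haF h => aux_krull ↥(PaperOE ℓ E) Fil hfg j a haF h
  have hHC : ∀ (j : ℤ) (g₀ : ℤ_[ℓ]) (a₀ : A), a₀ ∈ Fil j → ∀ s : ℕ,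
      ∃ t : ℕ, ∀ g, ((ℓ:ℕ):ℤ_[ℓ])^t ∣ (g - g₀) →
        ρ g a₀ - ρ g₀ a₀ ∈ (IsLocalRing.maximalIdeal ↥(PaperOE ℓ E)) ^ s • Fil j :=
    fun j g₀ a₀ ha₀ s => aux_rho_cont ↥(PaperOE ℓ E)
      (IsLocalRing.maximalIdeal ↥(PaperOE ℓ E)) Fil ρ hρ_fil j (hcont j) g₀ ha₀ s
  refine ⟨?_, ?_, ?_⟩
  · intro φ hφ
    exact aux_restrict ↥(PaperOE ℓ E) Cb hCb_cont hCb_nat Fil w d hφ.1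
  · intro φ φ' h1 h2 hres
    funext x
    have e1 : ∀ ψ : (Fin (n + 1) → ℤ_[ℓ]) → A, IsFilCpolZ Cb Fil w ρ d n ψ →
        ψ x = ρ (x 0) (ψ (Fin.cons 0 (fun t => x t.succ - x 0))) := by
      intro ψ hψ
      have h3 := hψ.2 (x 0) (Fin.cons 0 (fun t => x t.succ - x 0))
      rw [← h3]
      congr 1
      funext t
      refine Fin.cases ?_ (fun s => ?_) t
      · rw [Fin.cons_zero]
        ring
      · rw [Fin.cons_succ]
        ring
    rw [e1 φ h1, e1 φ' h2]
    exact congrArg (ρ (x 0)) (congrFun hres (fun t => x t.succ - x 0))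
  · intro f hf
    obtain ⟨c, hcl, hce⟩ := hf
    refine ⟨fun x => ρ (x 0) (f (fun t => x t.succ - x 0)), ⟨?_, ?_⟩, ?_⟩
    · have hφeq : (fun x : Fin (n+1) → ℤ_[ℓ] => ρ (x 0) (f (fun t => x t.succ - x 0)))
          = fun x : Fin (n+1) → ℤ_[ℓ] =>
              ρ (x 0) (auxFamSum ↥(PaperOE ℓ E) Cb c (fun t => x t.succ - x 0)) := by
        funext x
        rw [hce]
        rfl
      rw [hφeq]
      exact aux_surj ↥(PaperOE ℓ E) Cb hCb_cont hCb_nat Fil hmono hbot w hw ρ hρ_zero hρ_add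
        hρ_lin hρ_fil htriv (IsLocalRing.maximalIdeal ↥(PaperOE ℓ E)) hℓI hkrull hHC d c hcl
    · intro g x
      simp only []
      have harg : (fun t : Fin n => (x t.succ + g) - (x 0 + g)) = fun t => x t.succ - x 0 :=
        funext fun t => by ring
      rw [harg, add_comm (x 0) g, hρ_add g (x 0)]
    · intro x
      simp only [Fin.cons_zero, Fin.cons_succ, sub_zero, hρ_zero]
end
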